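/- arXiv:1510.02975 — 6 statements merged into one kernel-verified Lean document; each statement's English description precedes it below -/
import Mathlib

section
/- Let f be twice continuously differentiable on [x₀, x₁] with h = x₁ - x₀, and let p be the linear interpolant of f at x₀ and x₁, i.e., p(x) = f(x₀)(1 - (x-x₀)/h) + f(x₁)(x-x₀)/h. Then the squared L² error satisfies ∫_{x₀}^{x₁} (f(x) - p(x))² dx = (h⁵/120)·(f''(η))² for some η ∈ (x₀, x₁). -/
open MeasureTheory Set intervalIntegral

private lemma lagrange_err (f f' f'' : ℝ → ℝ) (x₀ x₁ : ℝ) (hx : x₀ < x₁)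
    (hf' : ∀ x ∈ Set.Icc x₀ x₁, HasDerivWithinAt f (f' x) (Set.Icc x₀ x₁) x)
    (hf'' : ∀ x ∈ Set.Icc x₀ x₁, HasDerivWithinAt f' (f'' x) (Set.Icc x₀ x₁) x)
    {c : ℝ} (hc : c ∈ Set.Ioo x₀ x₁) :
    ∃ ξ ∈ Set.Ioo x₀ x₁,
      f c - (f x₀ * (1 - (c - x₀) / (x₁ - x₀)) + f x₁ * ((c - x₀) / (x₁ - x₀)))
        = f'' ξ / 2 * ((c - x₀) * (c - x₁)) := by
  have hne : x₁ - x₀ ≠ 0 := sub_ne_zero.mpr hx.ne'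
  set s : ℝ := (f x₁ - f x₀) / (x₁ - x₀) with hs
  have hden : (c - x₀) * (c - x₁) ≠ 0 :=
    mul_ne_zero (ne_of_gt (by linarith [hc.1])) (ne_of_lt (by linarith [hc.2]))
  set K : ℝ := (f c - f x₀ - s * (c - x₀)) / ((c - x₀) * (c - x₁)) with hK
  set g : ℝ → ℝ := fun t => f t - f x₀ - s * (t - x₀) - K * ((t - x₀) * (t - x₁)) with hg
  set gd : ℝ → ℝ := fun t => f' t - s - K * (2 * t - x₀ - x₁) with hgd
  have hfc : ContinuousOn f (Set.Icc x₀ x₁) := fun t ht => (hf' t ht).continuousWithinAt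
  have hf'c : ContinuousOn f' (Set.Icc x₀ x₁) := fun t ht => (hf'' t ht).continuousWithinAt
  have hgc : ContinuousOn g (Set.Icc x₀ x₁) := by
    apply ContinuousOn.sub
    · apply ContinuousOn.sub (hfc.sub continuousOn_const)
      exact (continuous_const.mul (continuous_id.sub continuous_const)).continuousOn
    · exact (continuous_const.mul ((continuous_id.sub continuous_const).mul
        (continuous_id.sub continuous_const))).continuousOn
  have hgdc : ContinuousOn gd (Set.Icc x₀ x₁) := by
    apply ContinuousOn.sub (hf'c.sub continuousOn_const)
    exact (continuous_const.mul (((continuous_const.mul continuous_id).sub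
      continuous_const).sub continuous_const)).continuousOn
  have hgderiv : ∀ t ∈ Set.Ioo x₀ x₁, HasDerivAt g (gd t) t := by
    intro t ht
    have hft : HasDerivAt f (f' t) t :=
      (hf' t (Ioo_subset_Icc_self ht)).hasDerivAt (Icc_mem_nhds ht.1 ht.2)
    have hder : HasDerivAt (fun t : ℝ => f t - f x₀ - s * (t - x₀) - K * ((t - x₀) * (t - x₁)))
        (f' t - s * 1 - K * (1 * (t - x₁) + (t - x₀) * 1)) t :=
      ((hft.sub_const (f x₀)).sub (((hasDerivAt_id t).sub_const x₀).const_mul s)).sub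
        ((((hasDerivAt_id t).sub_const x₀).mul ((hasDerivAt_id t).sub_const x₁)).const_mul K)
    convert hder using 1
    simp only [hgd]; ring
  have hgdderiv : ∀ t ∈ Set.Ioo x₀ x₁, HasDerivAt gd (f'' t - K * 2) t := by
    intro t ht
    have hft : HasDerivAt f' (f'' t) t :=
      (hf'' t (Ioo_subset_Icc_self ht)).hasDerivAt (Icc_mem_nhds ht.1 ht.2)
    have hder : HasDerivAt (fun t : ℝ => f' t - s - K * (2 * t - x₀ - x₁))
        (f'' t - K * (2 * 1)) t :=
      ((hft.sub_const s).sub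
        (((((hasDerivAt_id t).const_mul 2).sub_const x₀).sub_const x₁).const_mul K))
    convert hder using 1
    all_goals ring
  have hg0 : g x₀ = 0 := by simp only [hg]; ring
  have hg1 : g x₁ = 0 := by
    simp only [hg, hs]
    field_simp
    ring
  have hgcval : g c = 0 := by
    simp only [hg, hK]
    field_simp
    rw [div_self hden]; ring
  -- Rolle on [x₀, c]
  obtain ⟨ξ₁, hξ₁, hd1⟩ := exists_hasDerivAt_eq_zero hc.1
    (hgc.mono (Icc_subset_Icc le_rfl hc.2.le)) (by rw [hg0, hgcval])
    (fun t ht => hgderiv t ⟨ht.1, ht.2.trans hc.2⟩)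
  -- Rolle on [c, x₁]
  obtain ⟨ξ₂, hξ₂, hd2⟩ := exists_hasDerivAt_eq_zero hc.2
    (hgc.mono (Icc_subset_Icc hc.1.le le_rfl)) (by rw [hgcval, hg1])
    (fun t ht => hgderiv t ⟨hc.1.trans ht.1, ht.2⟩)
  -- Rolle on [ξ₁, ξ₂]
  have hξ₁I : ξ₁ ∈ Set.Ioo x₀ x₁ := ⟨hξ₁.1, hξ₁.2.trans hc.2⟩
  have hξ₂I : ξ₂ ∈ Set.Ioo x₀ x₁ := ⟨hc.1.trans hξ₂.1, hξ₂.2⟩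
  obtain ⟨ξ, hξ, hd⟩ := exists_hasDerivAt_eq_zero (show ξ₁ < ξ₂ from hξ₁.2.trans hξ₂.1)
    (hgdc.mono (Icc_subset_Icc hξ₁I.1.le hξ₂I.2.le)) (by rw [hd1, hd2])
    (fun t ht => hgdderiv t ⟨hξ₁I.1.trans ht.1, ht.2.trans hξ₂I.2⟩)
  refine ⟨ξ, ⟨hξ₁I.1.trans hξ.1, hξ.2.trans hξ₂I.2⟩, ?_⟩
  have hf''ξ : f'' ξ = 2 * K := by linarith [hd]
  have hKeq : f c - f x₀ - s * (c - x₀) = K * ((c - x₀) * (c - x₁)) := by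
    rw [hK, div_mul_cancel₀ _ hden]
  have hP : f x₀ * (1 - (c - x₀) / (x₁ - x₀)) + f x₁ * ((c - x₀) / (x₁ - x₀))
      = f x₀ + s * (c - x₀) := by
    simp only [hs]; field_simp; ring
  rw [hP, hf''ξ]
  have h2 : 2 * K / 2 = K := by ring
  rw [h2]
  linarith [hKeq]

private lemma q_integral (x₀ x₁ : ℝ) :
    ∫ x in x₀..x₁, ((x - x₀) * (x - x₁))^2 / 4 = (x₁ - x₀)^5 / 120 := by
  set F : ℝ → ℝ := fun x =>
    ((x - x₀)^5 / 5 - (x₁ - x₀) * (x - x₀)^4 / 2 + (x₁ - x₀)^2 * (x - x₀)^3 / 3) / 4 with hF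
  have hFd : ∀ x, HasDerivAt F (((x - x₀) * (x - x₁))^2 / 4) x := by
    intro x
    have hu : HasDerivAt (fun t : ℝ => t - x₀) 1 x := (hasDerivAt_id x).sub_const x₀
    have : HasDerivAt F ((((5:ℕ) * (x - x₀)^4 * 1) / 5
        - (x₁ - x₀) * ((4:ℕ) * (x - x₀)^3 * 1) / 2
        + (x₁ - x₀)^2 * ((3:ℕ) * (x - x₀)^2 * 1) / 3) / 4) x := by
      exact ((((hu.pow 5).div_const 5).sub (((hu.pow 4).const_mul (x₁ - x₀)).div_const 2)).add
        (((hu.pow 3).const_mul ((x₁ - x₀)^2)).div_const 3)).div_const 4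
    convert this using 1
    push_cast
    ring
  rw [intervalIntegral.integral_eq_sub_of_hasDerivAt (fun x _ => hFd x)
    (((((continuous_id.sub continuous_const).mul
      (continuous_id.sub continuous_const)).pow 2).div_const 4).intervalIntegrable _ _)]
  simp only [hF]
  ring

/-- exact L² interpolation error formula (h⁵/120)·(f''(η))². -/
theorem linear_interpolant_sq_error
    (f f' f'' : ℝ → ℝ) (x₀ x₁ : ℝ) (hx : x₀ < x₁)
    (hf' : ∀ x ∈ Set.Icc x₀ x₁, HasDerivWithinAt f (f' x) (Set.Icc x₀ x₁) x)
    (hf'' : ∀ x ∈ Set.Icc x₀ x₁, HasDerivWithinAt f' (f'' x) (Set.Icc x₀ x₁) x)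
    (hf''c : ContinuousOn f'' (Set.Icc x₀ x₁)) :
    ∃ η ∈ Set.Ioo x₀ x₁,
      (∫ x in x₀..x₁,
        (f x - (f x₀ * (1 - (x - x₀) / (x₁ - x₀)) + f x₁ * ((x - x₀) / (x₁ - x₀))))^2)
      = (x₁ - x₀)^5 / 120 * (f'' η)^2 := by
  have hle := hx.le
  have hne : x₁ - x₀ ≠ 0 := sub_ne_zero.mpr hx.ne'
  set q : ℝ → ℝ := fun x => ((x - x₀) * (x - x₁))^2 / 4 with hq
  set E : ℝ → ℝ := fun x =>
    (f x - (f x₀ * (1 - (x - x₀) / (x₁ - x₀)) + f x₁ * ((x - x₀) / (x₁ - x₀))))^2 with hE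
  set g2 : ℝ → ℝ := fun x => (f'' x)^2 with hg2
  have c0pos : (0:ℝ) < (x₁ - x₀)^5 / 120 := by
    have := pow_pos (sub_pos.mpr hx) 5
    positivity
  have hfc : ContinuousOn f (Set.Icc x₀ x₁) := fun t ht => (hf' t ht).continuousWithinAt
  have hPc : Continuous fun x : ℝ =>
      f x₀ * (1 - (x - x₀) / (x₁ - x₀)) + f x₁ * ((x - x₀) / (x₁ - x₀)) := by
    exact (continuous_const.mul (continuous_const.sub
      ((continuous_id.sub continuous_const).div_const _))).add
      (continuous_const.mul ((continuous_id.sub continuous_const).div_const _))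
  have hEc : ContinuousOn E (Set.Icc x₀ x₁) := (hfc.sub hPc.continuousOn).pow 2
  have hEint : IntervalIntegrable E volume x₀ x₁ := by
    apply ContinuousOn.intervalIntegrable
    rwa [uIcc_of_le hle]
  have hqc : Continuous q :=
    (((continuous_id.sub continuous_const).mul (continuous_id.sub continuous_const)).pow 2).div_const 4
  have hg2c : ContinuousOn g2 (Set.Icc x₀ x₁) := hf''c.pow 2
  obtain ⟨a, haI, hmin⟩ := isCompact_Icc.exists_isMinOn (nonempty_Icc.mpr hle) hg2c
  obtain ⟨b, hbI, hmax⟩ := isCompact_Icc.exists_isMaxOn (nonempty_Icc.mpr hle) hg2c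
  -- pointwise representation on the open interval
  have hrep : ∀ x ∈ Set.Ioo x₀ x₁, ∃ ξ ∈ Set.Ioo x₀ x₁, E x = g2 ξ * q x := by
    intro x hxI
    obtain ⟨ξ, hξ, hval⟩ := lagrange_err f f' f'' x₀ x₁ hx hf' hf'' hxI
    refine ⟨ξ, hξ, ?_⟩
    simp only [hE, hq, hg2]
    rw [hval]
    ring
  have hE0 : E x₀ = 0 := by simp [hE]
  have hE1 : E x₁ = 0 := by simp [hE, div_self hne]
  have hq0 : q x₀ = 0 := by simp [hq]
  have hq1 : q x₁ = 0 := by simp [hq]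
  have hkey : ∀ x ∈ Set.Icc x₀ x₁, g2 a * q x ≤ E x ∧ E x ≤ g2 b * q x := by
    intro x hxI
    rcases eq_or_lt_of_le hxI.1 with h0 | h0
    · rw [← h0, hE0, hq0]; norm_num
    rcases eq_or_lt_of_le hxI.2 with h1 | h1
    · rw [h1, hE1, hq1]; norm_num
    obtain ⟨ξ, hξ, hEx⟩ := hrep x ⟨h0, h1⟩
    have hqnn : 0 ≤ q x := by simp only [hq]; positivity
    constructor
    · rw [hEx]; exact mul_le_mul_of_nonneg_right (hmin (Ioo_subset_Icc_self hξ)) hqnn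
    · rw [hEx]; exact mul_le_mul_of_nonneg_right (hmax (Ioo_subset_Icc_self hξ)) hqnn
  have hqint : ∀ r : ℝ, IntervalIntegrable (fun x => r * q x) volume x₀ x₁ :=
    fun r => (continuous_const.mul hqc).intervalIntegrable _ _
  have hqval : ∀ r : ℝ, (∫ x in x₀..x₁, r * q x) = r * ((x₁ - x₀)^5 / 120) := by
    intro r
    rw [intervalIntegral.integral_const_mul]
    congr 1
    exact q_integral x₀ x₁
  have hlow : g2 a * ((x₁ - x₀)^5 / 120) ≤ ∫ x in x₀..x₁, E x := by
    rw [← hqval (g2 a)]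
    exact intervalIntegral.integral_mono_on hle (hqint _) hEint (fun x hxI => (hkey x hxI).1)
  have hup : (∫ x in x₀..x₁, E x) ≤ g2 b * ((x₁ - x₀)^5 / 120) := by
    rw [← hqval (g2 b)]
    exact intervalIntegral.integral_mono_on hle hEint (hqint _) (fun x hxI => (hkey x hxI).2)
  set v : ℝ := (∫ x in x₀..x₁, E x) / ((x₁ - x₀)^5 / 120) with hv
  have hIv : (∫ x in x₀..x₁, E x) = v * ((x₁ - x₀)^5 / 120) :=
    (div_mul_cancel₀ _ (ne_of_gt c0pos)).symm
  have hmv : g2 a ≤ v := (le_div_iff₀ c0pos).mpr hlow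
  have hvM : v ≤ g2 b := (div_le_iff₀ c0pos).mpr hup
  suffices hfind : ∃ η ∈ Set.Ioo x₀ x₁, g2 η = v by
    obtain ⟨η, hη, hgη⟩ := hfind
    refine ⟨η, hη, ?_⟩
    show (∫ x in x₀..x₁, E x) = (x₁ - x₀)^5 / 120 * g2 η
    rw [hgη, hIv]; ring
  rcases eq_or_lt_of_le hmv with hm | hm
  · -- v = g2 a : equality at the minimum
    by_contra hcon
    push_neg at hcon
    have hstrict : ∀ x ∈ Set.Ioo x₀ x₁, 0 < E x - g2 a * q x := by
      intro x hxI
      obtain ⟨ξ, hξ, hEx⟩ := hrep x hxI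
      have hqpos : 0 < q x := by
        have h1 : (x - x₀) ≠ 0 := ne_of_gt (by linarith [hxI.1])
        have h2 : (x - x₁) ≠ 0 := ne_of_lt (by linarith [hxI.2])
        simp only [hq]
        positivity
      have hlt : g2 a < g2 ξ :=
        lt_of_le_of_ne (hmin (Ioo_subset_Icc_self hξ)) (fun heq => hcon ξ hξ (heq ▸ hm))
      rw [hEx]
      nlinarith
    have hpos := intervalIntegral.intervalIntegral_pos_of_pos_on
      (hEint.sub (hqint (g2 a))) hstrict hx
    rw [intervalIntegral.integral_sub hEint (hqint _), hqval, hIv, ← hm] at hpos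
    linarith
  rcases eq_or_lt_of_le hvM with hM | hM
  · -- v = g2 b : equality at the maximum
    by_contra hcon
    push_neg at hcon
    have hstrict : ∀ x ∈ Set.Ioo x₀ x₁, 0 < g2 b * q x - E x := by
      intro x hxI
      obtain ⟨ξ, hξ, hEx⟩ := hrep x hxI
      have hqpos : 0 < q x := by
        have h1 : (x - x₀) ≠ 0 := ne_of_gt (by linarith [hxI.1])
        have h2 : (x - x₁) ≠ 0 := ne_of_lt (by linarith [hxI.2])
        simp only [hq]
        positivity
      have hlt : g2 ξ < g2 b :=
        lt_of_le_of_ne (hmax (Ioo_subset_Icc_self hξ)) (fun heq => hcon ξ hξ (heq.trans hM.symm))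
      rw [hEx]
      nlinarith
    have hpos := intervalIntegral.intervalIntegral_pos_of_pos_on
      ((hqint (g2 b)).sub hEint) hstrict hx
    rw [intervalIntegral.integral_sub (hqint _) hEint, hqval, hIv, hM] at hpos
    linarith
  · -- strictly between: intermediate value theorem
    rcases le_total a b with hab | hab
    · obtain ⟨η, hη, hgη⟩ :=
        intermediate_value_Ioo hab (hg2c.mono (Icc_subset_Icc haI.1 hbI.2)) ⟨hm, hM⟩
      exact ⟨η, ⟨lt_of_le_of_lt haI.1 hη.1, lt_of_lt_of_le hη.2 hbI.2⟩, hgη⟩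
    · obtain ⟨η, hη, hgη⟩ :=
        intermediate_value_Ioo' hab (hg2c.mono (Icc_subset_Icc hbI.1 haI.2)) ⟨hm, hM⟩
      exact ⟨η, ⟨lt_of_le_of_lt hbI.1 hη.1, lt_of_lt_of_le hη.2 haI.2⟩, hgη⟩
end

section
/- Let f be twice continuously differentiable on [x₀, x₁] with h = x₁ - x₀, and let p be the linear interpolant of f at x₀ and x₁. Then ‖f - p‖_{L²([x₀,x₁])} ≤ (1/√120)·M·h^{5/2}, where M = max_{η ∈ [x₀,x₁]} |f''(η)|. -/
open MeasureTheory Set intervalIntegral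

/-- Pointwise interpolation error bound. -/
lemma pointwise_interp_bound
    (f f' f'' : ℝ → ℝ) (x₀ x₁ : ℝ) (hx : x₀ < x₁)
    (hf' : ∀ x ∈ Set.Icc x₀ x₁, HasDerivWithinAt f (f' x) (Set.Icc x₀ x₁) x)
    (hf'' : ∀ x ∈ Set.Icc x₀ x₁, HasDerivWithinAt f' (f'' x) (Set.Icc x₀ x₁) x)
    (M : ℝ) (hM : ∀ y ∈ Set.Icc x₀ x₁, |f'' y| ≤ M) :
    ∀ x ∈ Set.Icc x₀ x₁,
      |f x - (f x₀ * ((x₁ - x) / (x₁ - x₀)) + f x₁ * ((x - x₀) / (x₁ - x₀)))|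
        ≤ M / 2 * ((x - x₀) * (x₁ - x)) := by
  intro x hxm
  have hh : (0:ℝ) < x₁ - x₀ := by linarith
  have hhne : x₁ - x₀ ≠ 0 := ne_of_gt hh
  set g : ℝ → ℝ := fun t => f x₀ * ((x₁ - t) / (x₁ - x₀)) + f x₁ * ((t - x₀) / (x₁ - x₀)) with hg
  have hg0 : g x₀ = f x₀ := by simp only [hg]; field_simp; ring
  have hg1 : g x₁ = f x₁ := by simp only [hg]; field_simp; ring
  rcases eq_or_lt_of_le hxm.1 with h0 | h0
  · rw [← h0, show f x₀ - g x₀ = 0 by rw [hg0]; ring]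
    simp
  rcases eq_or_lt_of_le hxm.2 with h1 | h1
  · rw [h1, show f x₁ - g x₁ = 0 by rw [hg1]; ring]
    simp
  -- interior case
  have hkx : (0:ℝ) < (x - x₀) * (x₁ - x) := mul_pos (by linarith) (by linarith)
  set c : ℝ := (f x - g x) / ((x - x₀) * (x₁ - x)) with hc
  have hex : f x - g x = c * ((x - x₀) * (x₁ - x)) := by
    rw [hc, div_mul_cancel₀ _ (ne_of_gt hkx)]
  set φ : ℝ → ℝ := fun t => f t - g t - c * ((t - x₀) * (x₁ - t)) with hφ
  set φ' : ℝ → ℝ := fun t => f' t - (f x₁ - f x₀) / (x₁ - x₀) - c * (x₁ + x₀ - 2 * t) with hφ'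
  have hfc : ContinuousOn f (Set.Icc x₀ x₁) := fun t ht => (hf' t ht).continuousWithinAt
  have hf'c : ContinuousOn f' (Set.Icc x₀ x₁) := fun t ht => (hf'' t ht).continuousWithinAt
  have hφc : ContinuousOn φ (Set.Icc x₀ x₁) := by
    apply ContinuousOn.sub
    · apply hfc.sub
      apply Continuous.continuousOn; fun_prop
    · apply Continuous.continuousOn; fun_prop
  have hφd : ∀ t ∈ Set.Ioo x₀ x₁, HasDerivAt φ (φ' t) t := by
    intro t ht
    have hft : HasDerivAt f (f' t) t :=
      (hf' t (Set.Ioo_subset_Icc_self ht)).hasDerivAt (Icc_mem_nhds ht.1 ht.2)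
    have h1 : HasDerivAt (fun t : ℝ => g t + c * ((t - x₀) * (x₁ - t)))
        ((f x₁ - f x₀) / (x₁ - x₀) + c * (x₁ + x₀ - 2 * t)) t := by
      have hid : HasDerivAt (fun t : ℝ => t) 1 t := hasDerivAt_id t
      have ha : HasDerivAt (fun t : ℝ => x₁ - t) (0 - 1) t := (hasDerivAt_const t x₁).sub hid
      have hb : HasDerivAt (fun t : ℝ => t - x₀) 1 t := hid.sub_const x₀
      have h2 : HasDerivAt g (f x₀ * ((0 - 1) / (x₁ - x₀)) + f x₁ * (1 / (x₁ - x₀))) t :=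
        ((ha.div_const _).const_mul _).add ((hb.div_const _).const_mul _)
      have h3 : HasDerivAt (fun t : ℝ => c * ((t - x₀) * (x₁ - t)))
          (c * (1 * (x₁ - t) + (t - x₀) * (0 - 1))) t := (hb.mul ha).const_mul c
      convert h2.add h3 using 1
      · rfl
      · rfl
      · rfl
      field_simp
      ring
    have h2 := hft.sub h1
    convert h2 using 1
    · rfl
    · rfl
    · ext u; simp only [hφ, Pi.sub_apply]; ring
    · simp only [hφ']; ring
  have hφ'd : ∀ t ∈ Set.Ioo x₀ x₁, HasDerivAt φ' (f'' t + 2 * c) t := by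
    intro t ht
    have hft : HasDerivAt f' (f'' t) t :=
      (hf'' t (Set.Ioo_subset_Icc_self ht)).hasDerivAt (Icc_mem_nhds ht.1 ht.2)
    have h4 : HasDerivAt (fun t : ℝ => 2 * t) 2 t := by
      simpa using (hasDerivAt_id t).const_mul 2
    have h3 := (hasDerivAt_const t ((f x₁ - f x₀) / (x₁ - x₀))).add
      ((h4.const_sub (x₁ + x₀)).const_mul c)
    have h5 := hft.sub h3
    convert h5 using 1
    · rfl
    · rfl
    · ext u; simp only [hφ', Pi.sub_apply, Pi.add_apply]; ring
    · ring
  have hφ'c : ContinuousOn φ' (Set.Icc x₀ x₁) := by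
    apply ContinuousOn.sub
    · apply hf'c.sub; apply Continuous.continuousOn; fun_prop
    · apply Continuous.continuousOn; fun_prop
  have hφx₀ : φ x₀ = 0 := by simp only [hφ]; rw [hg0]; ring
  have hφx₁ : φ x₁ = 0 := by simp only [hφ]; rw [hg1]; ring
  have hφx : φ x = 0 := by simp only [hφ]; rw [hex]; ring
  obtain ⟨a, ha, hφ'a⟩ := exists_hasDerivAt_eq_zero h0
    (hφc.mono (Set.Icc_subset_Icc le_rfl (le_of_lt h1))) (hφx₀.trans hφx.symm)
    (fun t ht => hφd t ⟨ht.1, lt_trans ht.2 h1⟩)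
  obtain ⟨b, hb, hφ'b⟩ := exists_hasDerivAt_eq_zero h1
    (hφc.mono (Set.Icc_subset_Icc (le_of_lt h0) le_rfl)) (hφx.trans hφx₁.symm)
    (fun t ht => hφd t ⟨lt_trans h0 ht.1, ht.2⟩)
  have hab : a < b := lt_trans ha.2 hb.1
  obtain ⟨ξ, hξ, hξ0⟩ := exists_hasDerivAt_eq_zero hab (hφ'c.mono
      (Set.Icc_subset_Icc (by linarith [ha.1]) (by linarith [hb.2])))
    (hφ'a.trans hφ'b.symm)
    (fun t ht => hφ'd t ⟨by linarith [ha.1, ht.1], by linarith [hb.2, ht.2]⟩)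
  have hξI : ξ ∈ Set.Icc x₀ x₁ := ⟨by linarith [hξ.1, ha.1, ha.2], by linarith [hξ.2, hb.1, hb.2]⟩
  have hcb : |c| ≤ M / 2 := by
    have hMξ := hM ξ hξI
    have hcval : c = -f'' ξ / 2 := by linarith [hξ0]
    rw [hcval, abs_div, abs_neg, abs_two]
    linarith
  calc |f x - g x| = |c| * ((x - x₀) * (x₁ - x)) := by
        rw [hex, abs_mul, abs_of_nonneg hkx.le]
    _ ≤ M / 2 * ((x - x₀) * (x₁ - x)) := mul_le_mul_of_nonneg_right hcb hkx.le

lemma kernel_integral (x₀ x₁ : ℝ) :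
    ∫ x in x₀..x₁, ((x - x₀) * (x₁ - x))^2 = (x₁ - x₀)^5 / 30 := by
  have hF : ∀ x ∈ Set.uIcc x₀ x₁, HasDerivAt
      (fun x => (x - x₀)^5/5 - (x₁ - x₀)*(x - x₀)^4/2 + (x₁ - x₀)^2*(x - x₀)^3/3)
      (((x - x₀) * (x₁ - x))^2) x := by
    intro x _
    have hb : HasDerivAt (fun x : ℝ => x - x₀) 1 x := (hasDerivAt_id x).sub_const x₀
    have h5 := ((hb.pow 5).div_const 5)
    have h4 := (((hb.pow 4).const_mul (x₁ - x₀)).div_const 2)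
    have h3 := (((hb.pow 3).const_mul ((x₁ - x₀)^2)).div_const 3)
    have := (h5.sub h4).add h3
    convert this using 1
    · rfl
    · rfl
    · rfl
    push_cast
    ring
  have hInt : IntervalIntegrable (fun x => ((x - x₀) * (x₁ - x))^2) volume x₀ x₁ := by
    apply Continuous.intervalIntegrable; fun_prop
  rw [intervalIntegral.integral_eq_sub_of_hasDerivAt hF hInt]
  ring

/-- L² interpolation error bound (1/√120)·M·h^{5/2}. -/
theorem linear_interpolant_error_bound
    (f f' f'' : ℝ → ℝ) (x₀ x₁ : ℝ) (hx : x₀ < x₁)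
    (hf' : ∀ x ∈ Set.Icc x₀ x₁, HasDerivWithinAt f (f' x) (Set.Icc x₀ x₁) x)
    (hf'' : ∀ x ∈ Set.Icc x₀ x₁, HasDerivWithinAt f' (f'' x) (Set.Icc x₀ x₁) x)
    (hf''c : ContinuousOn f'' (Set.Icc x₀ x₁))
    (M : ℝ) (hM : IsGreatest ((fun x => |f'' x|) '' Set.Icc x₀ x₁) M) :
    Real.sqrt (∫ x in x₀..x₁,
        (f x - (f x₀ * ((x₁ - x) / (x₁ - x₀)) + f x₁ * ((x - x₀) / (x₁ - x₀))))^2)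
      ≤ (1 / Real.sqrt 120) * M * (x₁ - x₀) ^ ((5 : ℝ) / 2) := by
  have hle : x₀ ≤ x₁ := hx.le
  obtain ⟨y, hy, hyv⟩ := hM.1
  have hMnn : 0 ≤ M := hyv ▸ abs_nonneg _
  have hMb : ∀ y ∈ Set.Icc x₀ x₁, |f'' y| ≤ M := fun y hy => hM.2 ⟨y, hy, rfl⟩
  have hpt := pointwise_interp_bound f f' f'' x₀ x₁ hx hf' hf'' M hMb
  set e : ℝ → ℝ := fun x =>
    f x - (f x₀ * ((x₁ - x) / (x₁ - x₀)) + f x₁ * ((x - x₀) / (x₁ - x₀))) with he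
  have hfc : ContinuousOn f (Set.Icc x₀ x₁) := fun t ht => (hf' t ht).continuousWithinAt
  have hec : ContinuousOn (fun x => (e x)^2) (Set.Icc x₀ x₁) := by
    apply ContinuousOn.pow
    apply hfc.sub
    apply Continuous.continuousOn; fun_prop
  have hInt1 : IntervalIntegrable (fun x => (e x)^2) volume x₀ x₁ := by
    apply ContinuousOn.intervalIntegrable
    rwa [Set.uIcc_of_le hle]
  have hInt2 : IntervalIntegrable (fun x => (M/2 * ((x - x₀) * (x₁ - x)))^2) volume x₀ x₁ := by
    apply Continuous.intervalIntegrable; fun_prop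
  have hmono : ∫ x in x₀..x₁, (e x)^2 ≤ ∫ x in x₀..x₁, (M/2 * ((x - x₀) * (x₁ - x)))^2 := by
    apply intervalIntegral.integral_mono_on hle hInt1 hInt2
    intro x hxm
    calc (e x)^2 = |e x|^2 := (sq_abs _).symm
      _ ≤ (M/2 * ((x - x₀) * (x₁ - x)))^2 :=
          pow_le_pow_left₀ (abs_nonneg _) (hpt x hxm) 2
  have hval : ∫ x in x₀..x₁, (M/2 * ((x - x₀) * (x₁ - x)))^2 = M^2 * (x₁ - x₀)^5 / 120 := by
    have hsq : ∀ x : ℝ, (M/2 * ((x - x₀) * (x₁ - x)))^2 = (M/2)^2 * ((x - x₀) * (x₁ - x))^2 :=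
      fun x => by ring
    simp_rw [hsq]
    rw [intervalIntegral.integral_const_mul, kernel_integral]
    ring
  have hhnn : (0:ℝ) ≤ x₁ - x₀ := by linarith
  have hrpow : ((x₁ - x₀) ^ ((5:ℝ)/2))^2 = (x₁ - x₀)^5 := by
    rw [← Real.rpow_natCast ((x₁ - x₀) ^ ((5:ℝ)/2)) 2, ← Real.rpow_mul hhnn]
    norm_num
  have hrhsnn : 0 ≤ 1 / Real.sqrt 120 * M * (x₁ - x₀) ^ ((5:ℝ)/2) := by
    apply mul_nonneg (mul_nonneg (by positivity) hMnn) (Real.rpow_nonneg hhnn _)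
  have hkey : (1 / Real.sqrt 120 * M * (x₁ - x₀) ^ ((5:ℝ)/2))^2 = M^2 * (x₁ - x₀)^5 / 120 := by
    rw [mul_pow, mul_pow, hrpow, div_pow, one_pow, Real.sq_sqrt (by norm_num : (120:ℝ) ≥ 0)]
    ring
  calc Real.sqrt (∫ x in x₀..x₁, (e x)^2)
      ≤ Real.sqrt (M^2 * (x₁ - x₀)^5 / 120) := Real.sqrt_le_sqrt (hval ▸ hmono)
    _ = 1 / Real.sqrt 120 * M * (x₁ - x₀) ^ ((5:ℝ)/2) := by
        rw [← hkey, Real.sqrt_sq hrhsnn]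
end

section
/- Let f be C² on I = [x₀, x₁] with h = x₁ - x₀, and for real parameters d₀, d₁ consider the segment ℓ(x) = (f(x₀)+d₀)(1 - t(x)) + (f(x₁)+d₁)·t(x) with t(x) = (x - x₀)/h. Then the minimum over (d₀, d₁) of ∫_I (f - ℓ)² dx equals (h⁵/120)(f''(η))² − (h⁵/144)((f''(η₀))² + (f''(η₁))² − f''(η₀)f''(η₁)) for some η, η₀, η₁ ∈ (x₀, x₁). -/
set_option maxHeartbeats 1600000

open MeasureTheory Set intervalIntegral

private lemma integral_poly4 (a b c0 c1 c2 c3 c4 : ℝ) :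
    ∫ x in a..b, (c0 + c1*x + c2*x^2 + c3*x^3 + c4*x^4) =
      (c0*b + c1*b^2/2 + c2*b^3/3 + c3*b^4/4 + c4*b^5/5)
      - (c0*a + c1*a^2/2 + c2*a^3/3 + c3*a^4/4 + c4*a^5/5) := by
  have hd : ∀ x ∈ uIcc a b, HasDerivAt
      (fun x : ℝ => c0*x + c1*x^2/2 + c2*x^3/3 + c3*x^4/4 + c4*x^5/5)
      (c0 + c1*x + c2*x^2 + c3*x^3 + c4*x^4) x := by
    intro x _
    have : HasDerivAt (fun x : ℝ => c0*x + c1*x^2/2 + c2*x^3/3 + c3*x^4/4 + c4*x^5/5)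
        (c0*1 + c1*(2*x^1)/2 + c2*(3*x^2)/3 + c3*(4*x^3)/4 + c4*(5*x^4)/5) x :=
      ((((((hasDerivAt_id x).const_mul c0).add
        (((hasDerivAt_pow 2 x).const_mul c1).div_const 2)).add
        (((hasDerivAt_pow 3 x).const_mul c2).div_const 3)).add
        (((hasDerivAt_pow 4 x).const_mul c3).div_const 4)).add
        (((hasDerivAt_pow 5 x).const_mul c4).div_const 5))
    convert this using 1
    ring
  rw [intervalIntegral.integral_eq_sub_of_hasDerivAt hd (by
    apply Continuous.intervalIntegrable; continuity)]

private lemma weighted_mvt (g φ : ℝ → ℝ) (x₀ x₁ c : ℝ) (hx : x₀ < x₁)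
    (hg : ContinuousOn g (Set.Icc x₀ x₁)) (hφ : ContinuousOn φ (Set.Icc x₀ x₁))
    (hφpos : ∀ t ∈ Set.Ioo x₀ x₁, 0 < φ t)
    (hc : ∫ t in x₀..x₁, g t * φ t = c * ∫ t in x₀..x₁, φ t) :
    ∃ η ∈ Set.Ioo x₀ x₁, g η = c := by
  by_contra hno
  push_neg at hno
  have huicc : Set.uIcc x₀ x₁ = Set.Icc x₀ x₁ := Set.uIcc_of_le hx.le
  have hint : IntervalIntegrable (fun t => (g t - c) * φ t) volume x₀ x₁ := by
    apply ContinuousOn.intervalIntegrable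
    rw [huicc]
    exact ((hg.sub continuousOn_const).mul hφ)
  have hzero : ∫ t in x₀..x₁, (g t - c) * φ t = 0 := by
    have h1 : IntervalIntegrable (fun t => g t * φ t) volume x₀ x₁ := by
      apply ContinuousOn.intervalIntegrable; rw [huicc]; exact hg.mul hφ
    have h2 : IntervalIntegrable (fun t => c * φ t) volume x₀ x₁ := by
      apply ContinuousOn.intervalIntegrable; rw [huicc]; exact continuousOn_const.mul hφ
    have : ∫ t in x₀..x₁, (g t - c) * φ t
        = (∫ t in x₀..x₁, g t * φ t) - ∫ t in x₀..x₁, c * φ t := by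
      rw [← intervalIntegral.integral_sub h1 h2]
      apply intervalIntegral.integral_congr
      intro t _; ring
    rw [this, hc, intervalIntegral.integral_const_mul]; ring
  have hdich : (∀ t ∈ Set.Ioo x₀ x₁, c < g t) ∨ (∀ t ∈ Set.Ioo x₀ x₁, g t < c) := by
    by_cases hall : ∀ t ∈ Set.Ioo x₀ x₁, c < g t
    · exact Or.inl hall
    · right
      push_neg at hall
      obtain ⟨s, hs, hsle⟩ := hall
      have hslt : g s < c := lt_of_le_of_ne hsle (hno s hs)
      intro t ht
      by_contra htle
      push_neg at htle
      have htlt : c < g t := lt_of_le_of_ne htle (fun e => hno t ht e.symm)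
      rcases lt_trichotomy s t with hst | hst | hst
      · have hsub : Set.Icc s t ⊆ Set.Icc x₀ x₁ :=
          Set.Icc_subset_Icc hs.1.le ht.2.le
        have : c ∈ Set.Icc (g s) (g t) := ⟨hslt.le, htlt.le⟩
        obtain ⟨η, hη, hgη⟩ := intermediate_value_Icc hst.le (hg.mono hsub) this
        exact hno η ⟨lt_of_lt_of_le hs.1 hη.1, lt_of_le_of_lt hη.2 ht.2⟩ hgη
      · subst hst; exact absurd hslt (not_lt.mpr htlt.le)
      · have hsub : Set.Icc t s ⊆ Set.Icc x₀ x₁ :=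
          Set.Icc_subset_Icc ht.1.le hs.2.le
        have : c ∈ Set.Icc (g s) (g t) := ⟨hslt.le, htlt.le⟩
        obtain ⟨η, hη, hgη⟩ := intermediate_value_Icc' hst.le (hg.mono hsub) this
        exact hno η ⟨lt_of_lt_of_le ht.1 hη.1, lt_of_le_of_lt hη.2 hs.2⟩ hgη
  rcases hdich with hpos | hneg
  · have : 0 < ∫ t in x₀..x₁, (g t - c) * φ t :=
      intervalIntegral_pos_of_pos_on hint
        (fun t ht => mul_pos (sub_pos.mpr (hpos t ht)) (hφpos t ht)) hx
    exact absurd hzero (ne_of_gt this)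
  · have : 0 < ∫ t in x₀..x₁, (c - g t) * φ t := by
      apply intervalIntegral_pos_of_pos_on _
        (fun t ht => mul_pos (sub_pos.mpr (hneg t ht)) (hφpos t ht)) hx
      apply ContinuousOn.intervalIntegrable
      rw [huicc]
      exact ((continuousOn_const.sub hg).mul hφ)
    have heq : ∫ t in x₀..x₁, (c - g t) * φ t = - ∫ t in x₀..x₁, (g t - c) * φ t := by
      rw [← intervalIntegral.integral_neg]
      apply intervalIntegral.integral_congr
      intro t _; ring
    rw [heq, hzero, neg_zero] at this
    exact lt_irrefl 0 this

private lemma interp_error (f f' f'' : ℝ → ℝ) (x₀ x₁ : ℝ) (hx : x₀ < x₁)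
    (hf' : ∀ x ∈ Set.Icc x₀ x₁, HasDerivWithinAt f (f' x) (Set.Icc x₀ x₁) x)
    (hf'' : ∀ x ∈ Set.Icc x₀ x₁, HasDerivWithinAt f' (f'' x) (Set.Icc x₀ x₁) x)
    (x : ℝ) (hxm : x ∈ Set.Ioo x₀ x₁) :
    ∃ ξ ∈ Set.Ioo x₀ x₁,
      f x - (f x₀ * (1 - (x - x₀) / (x₁ - x₀)) + f x₁ * ((x - x₀) / (x₁ - x₀)))
        = f'' ξ / 2 * ((x - x₀) * (x - x₁)) := by
  have hne : x₁ - x₀ ≠ 0 := ne_of_gt (sub_pos.mpr hx)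
  have hwx : (x - x₀) * (x - x₁) ≠ 0 :=
    mul_ne_zero (ne_of_gt (sub_pos.mpr hxm.1)) (ne_of_lt (sub_neg.mpr hxm.2))
  set k : ℝ := (f x - (f x₀ * (1 - (x - x₀) / (x₁ - x₀)) + f x₁ * ((x - x₀) / (x₁ - x₀))))
      / ((x - x₀) * (x - x₁)) with hk
  set m : ℝ := (f x₁ - f x₀) / (x₁ - x₀) with hm
  set g : ℝ → ℝ := fun y =>
    f y - (f x₀ * (1 - (y - x₀) / (x₁ - x₀)) + f x₁ * ((y - x₀) / (x₁ - x₀))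
      + k * ((y - x₀) * (y - x₁))) with hg
  set g' : ℝ → ℝ := fun y => f' y - (m + k * (2*y - x₀ - x₁)) with hg'
  have hfc : ContinuousOn f (Set.Icc x₀ x₁) := fun y hy => (hf' y hy).continuousWithinAt
  have hf'c : ContinuousOn f' (Set.Icc x₀ x₁) := fun y hy => (hf'' y hy).continuousWithinAt
  have hgc : ContinuousOn g (Set.Icc x₀ x₁) := by
    apply ContinuousOn.sub hfc
    apply Continuous.continuousOn; fun_prop
  have hgd : ∀ y ∈ Set.Ioo x₀ x₁, HasDerivAt g (g' y) y := by
    intro y hy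
    have hfd : HasDerivAt f (f' y) y :=
      (hf' y (Set.Ioo_subset_Icc_self hy)).hasDerivAt (Icc_mem_nhds hy.1 hy.2)
    have hq : HasDerivAt (fun y : ℝ =>
        f x₀ * (1 - (y - x₀) / (x₁ - x₀)) + f x₁ * ((y - x₀) / (x₁ - x₀))
          + k * ((y - x₀) * (y - x₁))) (m + k * (2*y - x₀ - x₁)) y := by
      have h1 : HasDerivAt (fun y : ℝ => y - x₀) 1 y := (hasDerivAt_id y).sub_const x₀
      have h2 : HasDerivAt (fun y : ℝ => y - x₁) 1 y := (hasDerivAt_id y).sub_const x₁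
      have h3 : HasDerivAt (fun y : ℝ => (y - x₀) * (y - x₁))
          (1 * (y - x₁) + (y - x₀) * 1) y := h1.mul h2
      have h4 : HasDerivAt (fun y : ℝ =>
          f x₀ * (1 - (y - x₀) / (x₁ - x₀)) + f x₁ * ((y - x₀) / (x₁ - x₀))
            + k * ((y - x₀) * (y - x₁)))
          (f x₀ * (0 - 1 / (x₁ - x₀)) + f x₁ * (1 / (x₁ - x₀))
            + k * (1 * (y - x₁) + (y - x₀) * 1)) y := by
        exact ((((hasDerivAt_const y (1:ℝ)).sub (h1.div_const _)).const_mul (f x₀)).add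
          ((h1.div_const _).const_mul (f x₁))).add (h3.const_mul k)
      convert h4 using 1
      rw [hm]; field_simp
      ring
    exact hfd.sub hq
  have hg0 : g x₀ = 0 := by simp only [hg]; ring_nf
  have hg1 : g x₁ = 0 := by
    simp only [hg]
    field_simp
    ring
  have hgx : g x = 0 := by
    simp only [hg, hk]
    field_simp [sub_ne_zero.mpr hxm.1.ne', sub_ne_zero.mpr hxm.2.ne]
    ring
  obtain ⟨ζ₁, hζ₁, hζ₁0⟩ := exists_hasDerivAt_eq_zero hxm.1
    (hgc.mono (Set.Icc_subset_Icc le_rfl hxm.2.le)) (hg0.trans hgx.symm)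
    (fun y hy => hgd y ⟨hy.1, hy.2.trans hxm.2⟩)
  obtain ⟨ζ₂, hζ₂, hζ₂0⟩ := exists_hasDerivAt_eq_zero hxm.2
    (hgc.mono (Set.Icc_subset_Icc hxm.1.le le_rfl)) (hgx.trans hg1.symm)
    (fun y hy => hgd y ⟨hxm.1.trans hy.1, hy.2⟩)
  have hζζ : ζ₁ < ζ₂ := hζ₁.2.trans hζ₂.1
  have hsub : Set.Icc ζ₁ ζ₂ ⊆ Set.Icc x₀ x₁ :=
    Set.Icc_subset_Icc hζ₁.1.le (hζ₂.2.le)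
  have hsubo : Set.Ioo ζ₁ ζ₂ ⊆ Set.Ioo x₀ x₁ := fun y hy =>
    ⟨hζ₁.1.trans hy.1, hy.2.trans hζ₂.2⟩
  have hg'c : ContinuousOn g' (Set.Icc ζ₁ ζ₂) := by
    apply ContinuousOn.sub (hf'c.mono hsub)
    apply Continuous.continuousOn; fun_prop
  obtain ⟨ξ, hξ, hξ0⟩ := exists_hasDerivAt_eq_zero hζζ hg'c (hζ₁0.trans hζ₂0.symm)
    (by
      intro y hy
      have hyI := hsubo hy
      have hf'd : HasDerivAt f' (f'' y) y :=
        (hf'' y (Set.Ioo_subset_Icc_self hyI)).hasDerivAt (Icc_mem_nhds hyI.1 hyI.2)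
      have h5 : HasDerivAt (fun y : ℝ => m + k * (2*y - x₀ - x₁)) (k * 2) y := by
        have : HasDerivAt (fun y : ℝ => 2*y - x₀ - x₁) 2 y := by
          simpa using (((hasDerivAt_id y).const_mul (2:ℝ)).sub_const x₀).sub_const x₁
        simpa using (this.const_mul k).const_add m
      exact hf'd.sub h5)
  refine ⟨ξ, hsubo hξ, ?_⟩
  have hk2 : f'' ξ = 2 * k := by
    have : f'' ξ - k * 2 = 0 := by simpa [hg'] using hξ0
    linarith
  rw [hk2, hk]
  field_simp [sub_ne_zero.mpr hxm.1.ne', sub_ne_zero.mpr hxm.2.ne]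

private lemma quad_expand (f : ℝ → ℝ) (x₀ x₁ : ℝ) (hx : x₀ < x₁)
    (hfc : ContinuousOn f (Set.Icc x₀ x₁)) (p q : ℝ) :
    ∫ x in x₀..x₁, (f x - (p * (1 - (x - x₀) / (x₁ - x₀)) + q * ((x - x₀) / (x₁ - x₀))))^2
      = (∫ x in x₀..x₁, (f x)^2)
        - 2*p*(∫ x in x₀..x₁, f x * (1 - (x - x₀) / (x₁ - x₀)))
        - 2*q*(∫ x in x₀..x₁, f x * ((x - x₀) / (x₁ - x₀)))
        + (x₁ - x₀)/3 * (p^2 + p*q + q^2) := by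
  have hne : x₁ - x₀ ≠ 0 := ne_of_gt (sub_pos.mpr hx)
  have huicc : Set.uIcc x₀ x₁ = Set.Icc x₀ x₁ := Set.uIcc_of_le hx.le
  have hu : Continuous (fun x : ℝ => 1 - (x - x₀) / (x₁ - x₀)) := by fun_prop
  have hv : Continuous (fun x : ℝ => (x - x₀) / (x₁ - x₀)) := by fun_prop
  have i1 : IntervalIntegrable (fun x => (f x)^2) volume x₀ x₁ := by
    apply ContinuousOn.intervalIntegrable; rw [huicc]; exact hfc.pow 2
  have i2 : IntervalIntegrable (fun x => 2*p*(f x * (1 - (x - x₀) / (x₁ - x₀)))) volume x₀ x₁ := by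
    apply ContinuousOn.intervalIntegrable; rw [huicc]
    exact continuousOn_const.mul (hfc.mul hu.continuousOn)
  have i3 : IntervalIntegrable (fun x => 2*q*(f x * ((x - x₀) / (x₁ - x₀)))) volume x₀ x₁ := by
    apply ContinuousOn.intervalIntegrable; rw [huicc]
    exact continuousOn_const.mul (hfc.mul hv.continuousOn)
  have i4 : IntervalIntegrable
      (fun x => (p * (1 - (x - x₀) / (x₁ - x₀)) + q * ((x - x₀) / (x₁ - x₀)))^2) volume x₀ x₁ := by
    apply Continuous.intervalIntegrable; fun_prop
  have step1 : ∫ x in x₀..x₁,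
      (f x - (p * (1 - (x - x₀) / (x₁ - x₀)) + q * ((x - x₀) / (x₁ - x₀))))^2
      = ∫ x in x₀..x₁, ((f x)^2 - 2*p*(f x * (1 - (x - x₀) / (x₁ - x₀)))
          - 2*q*(f x * ((x - x₀) / (x₁ - x₀)))
          + (p * (1 - (x - x₀) / (x₁ - x₀)) + q * ((x - x₀) / (x₁ - x₀)))^2) := by
    apply intervalIntegral.integral_congr
    intro x _; ring
  have step2 : ∫ x in x₀..x₁, ((f x)^2 - 2*p*(f x * (1 - (x - x₀) / (x₁ - x₀)))
          - 2*q*(f x * ((x - x₀) / (x₁ - x₀)))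
          + (p * (1 - (x - x₀) / (x₁ - x₀)) + q * ((x - x₀) / (x₁ - x₀)))^2)
      = (∫ x in x₀..x₁, (f x)^2) - (∫ x in x₀..x₁, 2*p*(f x * (1 - (x - x₀) / (x₁ - x₀))))
        - (∫ x in x₀..x₁, 2*q*(f x * ((x - x₀) / (x₁ - x₀))))
        + ∫ x in x₀..x₁, (p * (1 - (x - x₀) / (x₁ - x₀)) + q * ((x - x₀) / (x₁ - x₀)))^2 := by
    rw [intervalIntegral.integral_add ((i1.sub i2).sub i3) i4,
        intervalIntegral.integral_sub (i1.sub i2) i3,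
        intervalIntegral.integral_sub i1 i2]
  have step3 : ∫ x in x₀..x₁,
      (p * (1 - (x - x₀) / (x₁ - x₀)) + q * ((x - x₀) / (x₁ - x₀)))^2
      = (x₁ - x₀)/3 * (p^2 + p*q + q^2) := by
    have e : ∀ x ∈ Set.uIcc x₀ x₁,
        (p * (1 - (x - x₀) / (x₁ - x₀)) + q * ((x - x₀) / (x₁ - x₀)))^2
        = ((p*x₁ - q*x₀)^2/(x₁-x₀)^2) + (2*(p*x₁ - q*x₀)*(q-p)/(x₁-x₀)^2)*x
          + ((q-p)^2/(x₁-x₀)^2)*x^2 + 0*x^3 + 0*x^4 := by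
      intro x _
      field_simp
      ring
    rw [intervalIntegral.integral_congr e, integral_poly4]
    field_simp
    ring
  rw [step1, step2, step3, intervalIntegral.integral_const_mul,
      intervalIntegral.integral_const_mul]

private lemma lin_expand (f : ℝ → ℝ) (x₀ x₁ : ℝ) (hx : x₀ < x₁)
    (hfc : ContinuousOn f (Set.Icc x₀ x₁)) (c₀ c₁ α β : ℝ) :
    ∫ x in x₀..x₁, (f x - (c₀ * (1 - (x - x₀) / (x₁ - x₀)) + c₁ * ((x - x₀) / (x₁ - x₀))))
        * (α * (1 - (x - x₀) / (x₁ - x₀)) + β * ((x - x₀) / (x₁ - x₀)))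
      = α * (∫ x in x₀..x₁, f x * (1 - (x - x₀) / (x₁ - x₀)))
        + β * (∫ x in x₀..x₁, f x * ((x - x₀) / (x₁ - x₀)))
        - (x₁ - x₀)/6 * (α*(2*c₀ + c₁) + β*(c₀ + 2*c₁)) := by
  have hne : x₁ - x₀ ≠ 0 := ne_of_gt (sub_pos.mpr hx)
  have huicc : Set.uIcc x₀ x₁ = Set.Icc x₀ x₁ := Set.uIcc_of_le hx.le
  have hu : Continuous (fun x : ℝ => 1 - (x - x₀) / (x₁ - x₀)) := by fun_prop
  have hv : Continuous (fun x : ℝ => (x - x₀) / (x₁ - x₀)) := by fun_prop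
  have i2 : IntervalIntegrable (fun x => α*(f x * (1 - (x - x₀) / (x₁ - x₀)))) volume x₀ x₁ := by
    apply ContinuousOn.intervalIntegrable; rw [huicc]
    exact continuousOn_const.mul (hfc.mul hu.continuousOn)
  have i3 : IntervalIntegrable (fun x => β*(f x * ((x - x₀) / (x₁ - x₀)))) volume x₀ x₁ := by
    apply ContinuousOn.intervalIntegrable; rw [huicc]
    exact continuousOn_const.mul (hfc.mul hv.continuousOn)
  have i4 : IntervalIntegrable
      (fun x => (c₀ * (1 - (x - x₀) / (x₁ - x₀)) + c₁ * ((x - x₀) / (x₁ - x₀)))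
        * (α * (1 - (x - x₀) / (x₁ - x₀)) + β * ((x - x₀) / (x₁ - x₀)))) volume x₀ x₁ := by
    apply Continuous.intervalIntegrable; fun_prop
  have step1 : ∫ x in x₀..x₁,
      (f x - (c₀ * (1 - (x - x₀) / (x₁ - x₀)) + c₁ * ((x - x₀) / (x₁ - x₀))))
        * (α * (1 - (x - x₀) / (x₁ - x₀)) + β * ((x - x₀) / (x₁ - x₀)))
      = ∫ x in x₀..x₁, (α*(f x * (1 - (x - x₀) / (x₁ - x₀))) + β*(f x * ((x - x₀) / (x₁ - x₀)))
          - (c₀ * (1 - (x - x₀) / (x₁ - x₀)) + c₁ * ((x - x₀) / (x₁ - x₀)))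
            * (α * (1 - (x - x₀) / (x₁ - x₀)) + β * ((x - x₀) / (x₁ - x₀)))) := by
    apply intervalIntegral.integral_congr
    intro x _; ring
  have step3 : ∫ x in x₀..x₁,
      (c₀ * (1 - (x - x₀) / (x₁ - x₀)) + c₁ * ((x - x₀) / (x₁ - x₀)))
        * (α * (1 - (x - x₀) / (x₁ - x₀)) + β * ((x - x₀) / (x₁ - x₀)))
      = (x₁ - x₀)/6 * (α*(2*c₀ + c₁) + β*(c₀ + 2*c₁)) := by
    have e : ∀ x ∈ Set.uIcc x₀ x₁,
        (c₀ * (1 - (x - x₀) / (x₁ - x₀)) + c₁ * ((x - x₀) / (x₁ - x₀)))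
          * (α * (1 - (x - x₀) / (x₁ - x₀)) + β * ((x - x₀) / (x₁ - x₀)))
        = ((c₀*x₁ - c₁*x₀)*(α*x₁ - β*x₀)/(x₁-x₀)^2)
          + (((c₀*x₁ - c₁*x₀)*(β-α) + (c₁-c₀)*(α*x₁ - β*x₀))/(x₁-x₀)^2)*x
          + ((c₁-c₀)*(β-α)/(x₁-x₀)^2)*x^2 + 0*x^3 + 0*x^4 := by
      intro x _
      field_simp
      ring
    rw [intervalIntegral.integral_congr e, integral_poly4]
    field_simp
    ring
  rw [step1, intervalIntegral.integral_sub (i2.add i3) i4,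
      intervalIntegral.integral_add i2 i3, step3,
      intervalIntegral.integral_const_mul, intervalIntegral.integral_const_mul]

private lemma ibp_weight (f f' f'' : ℝ → ℝ) (x₀ x₁ : ℝ) (hx : x₀ < x₁)
    (hf' : ∀ x ∈ Set.Icc x₀ x₁, HasDerivWithinAt f (f' x) (Set.Icc x₀ x₁) x)
    (hf'' : ∀ x ∈ Set.Icc x₀ x₁, HasDerivWithinAt f' (f'' x) (Set.Icc x₀ x₁) x)
    (hf''c : ContinuousOn f'' (Set.Icc x₀ x₁))
    (φ φ' χ : ℝ → ℝ) (hχ : Continuous χ)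
    (hφd : ∀ x, HasDerivAt φ (φ' x) x) (hφ'd : ∀ x, HasDerivAt φ' (χ x) x)
    (hφ0 : φ x₀ = 0) (hφ1 : φ x₁ = 0) :
    ∫ x in x₀..x₁,
        (f x - (f x₀ * (1 - (x - x₀) / (x₁ - x₀)) + f x₁ * ((x - x₀) / (x₁ - x₀)))) * χ x
      = ∫ x in x₀..x₁, f'' x * φ x := by
  have hne : x₁ - x₀ ≠ 0 := ne_of_gt (sub_pos.mpr hx)
  have huicc : Set.uIcc x₀ x₁ = Set.Icc x₀ x₁ := Set.uIcc_of_le hx.le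
  have hfc : ContinuousOn f (Set.Icc x₀ x₁) := fun y hy => (hf' y hy).continuousWithinAt
  have hf'c : ContinuousOn f' (Set.Icc x₀ x₁) := fun y hy => (hf'' y hy).continuousWithinAt
  set m : ℝ := (f x₁ - f x₀) / (x₁ - x₀) with hm
  set r : ℝ → ℝ := fun y =>
    f y - (f x₀ * (1 - (y - x₀) / (x₁ - x₀)) + f x₁ * ((y - x₀) / (x₁ - x₀))) with hr
  have hφc : Continuous φ := by
    rw [continuous_iff_continuousAt]; exact fun x => (hφd x).continuousAt
  have hφ'c : Continuous φ' := by
    rw [continuous_iff_continuousAt]; exact fun x => (hφ'd x).continuousAt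
  have hrc : ContinuousOn r (Set.Icc x₀ x₁) := by
    apply hfc.sub; apply Continuous.continuousOn; fun_prop
  have hr0 : r x₀ = 0 := by simp [hr]
  have hr1 : r x₁ = 0 := by simp only [hr]; field_simp; ring
  set W : ℝ → ℝ := fun y => r y * φ' y - (f' y - m) * φ y with hW
  have hWc : ContinuousOn W (Set.Icc x₀ x₁) := by
    apply ContinuousOn.sub (hrc.mul hφ'c.continuousOn)
    exact (hf'c.sub continuousOn_const).mul hφc.continuousOn
  have hderiv : ∀ y ∈ Set.Ioo x₀ x₁,
      HasDerivWithinAt W (r y * χ y - f'' y * φ y) (Set.Ioi y) y := by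
    intro y hy
    have hmem := Set.Ioo_subset_Icc_self hy
    have hnb : Set.Icc x₀ x₁ ∈ nhds y := Icc_mem_nhds hy.1 hy.2
    have hfd : HasDerivAt f (f' y) y := (hf' y hmem).hasDerivAt hnb
    have hf'd : HasDerivAt f' (f'' y) y := (hf'' y hmem).hasDerivAt hnb
    have h1 : HasDerivAt (fun y : ℝ => y - x₀) 1 y := (hasDerivAt_id y).sub_const x₀
    have hLd : HasDerivAt (fun y : ℝ =>
        f x₀ * (1 - (y - x₀) / (x₁ - x₀)) + f x₁ * ((y - x₀) / (x₁ - x₀))) m y := by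
      have h4 : HasDerivAt (fun y : ℝ =>
          f x₀ * (1 - (y - x₀) / (x₁ - x₀)) + f x₁ * ((y - x₀) / (x₁ - x₀)))
          (f x₀ * (0 - 1 / (x₁ - x₀)) + f x₁ * (1 / (x₁ - x₀))) y :=
        (((hasDerivAt_const y (1:ℝ)).sub (h1.div_const _)).const_mul (f x₀)).add
          ((h1.div_const _).const_mul (f x₁))
      convert h4 using 1
      rw [hm]; field_simp
      ring
    have hrd : HasDerivAt r (f' y - m) y := hfd.sub hLd
    have hr'd : HasDerivAt (fun y => f' y - m) (f'' y) y := hf'd.sub_const m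
    have hWd : HasDerivAt W
        (((f' y - m) * φ' y + r y * χ y) - (f'' y * φ y + (f' y - m) * φ' y)) y :=
      (hrd.mul (hφ'd y)).sub (hr'd.mul (hφd y))
    have : HasDerivAt W (r y * χ y - f'' y * φ y) y := by
      convert hWd using 1; ring
    exact this.hasDerivWithinAt
  have hint : IntervalIntegrable (fun y => r y * χ y - f'' y * φ y) volume x₀ x₁ := by
    apply ContinuousOn.intervalIntegrable; rw [huicc]
    exact (hrc.mul hχ.continuousOn).sub (hf''c.mul hφc.continuousOn)
  have key : ∫ y in x₀..x₁, (r y * χ y - f'' y * φ y) = W x₁ - W x₀ :=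
    intervalIntegral.integral_eq_sub_of_hasDeriv_right_of_le hx.le hWc hderiv hint
  have hW0 : W x₀ = 0 := by simp [hW, hr0, hφ0]
  have hW1 : W x₁ = 0 := by simp [hW, hr1, hφ1]
  have i1 : IntervalIntegrable (fun y => r y * χ y) volume x₀ x₁ := by
    apply ContinuousOn.intervalIntegrable; rw [huicc]; exact hrc.mul hχ.continuousOn
  have i2 : IntervalIntegrable (fun y => f'' y * φ y) volume x₀ x₁ := by
    apply ContinuousOn.intervalIntegrable; rw [huicc]; exact hf''c.mul hφc.continuousOn
  rw [intervalIntegral.integral_sub i1 i2, hW0, hW1] at key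
  have : ∫ y in x₀..x₁, r y * χ y = ∫ y in x₀..x₁, f'' y * φ y := by linarith
  simpa [hr] using this

private lemma weight_a (f f' f'' : ℝ → ℝ) (x₀ x₁ : ℝ) (hx : x₀ < x₁)
    (hf' : ∀ x ∈ Set.Icc x₀ x₁, HasDerivWithinAt f (f' x) (Set.Icc x₀ x₁) x)
    (hf'' : ∀ x ∈ Set.Icc x₀ x₁, HasDerivWithinAt f' (f'' x) (Set.Icc x₀ x₁) x)
    (hf''c : ContinuousOn f'' (Set.Icc x₀ x₁)) :
    ∃ η₀ ∈ Set.Ioo x₀ x₁,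
      ∫ x in x₀..x₁,
          (f x - (f x₀ * (1 - (x - x₀) / (x₁ - x₀)) + f x₁ * ((x - x₀) / (x₁ - x₀))))
            * (1 - (x - x₀) / (x₁ - x₀))
        = -(f'' η₀) * (x₁ - x₀)^3 / 24 := by
  have hne : x₁ - x₀ ≠ 0 := ne_of_gt (sub_pos.mpr hx)
  have hφd : ∀ x : ℝ, HasDerivAt
      (fun x : ℝ => (x - x₀)^2/2 - (x - x₀)^3/(6*(x₁ - x₀)) - (x₁ - x₀)*(x - x₀)/3)
      ((x - x₀) - (x - x₀)^2/(2*(x₁ - x₀)) - (x₁ - x₀)/3) x := by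
    intro x
    have h1 : HasDerivAt (fun x : ℝ => x - x₀) 1 x := (hasDerivAt_id x).sub_const x₀
    have h2 : HasDerivAt (fun x : ℝ => (x - x₀)^2) ((2:ℕ)*(x - x₀)^1*1) x := h1.pow 2
    have h3 : HasDerivAt (fun x : ℝ => (x - x₀)^3) ((3:ℕ)*(x - x₀)^2*1) x := h1.pow 3
    have h4 := ((h2.div_const 2).sub (h3.div_const (6*(x₁ - x₀)))).sub
      ((h1.const_mul (x₁ - x₀)).div_const 3)
    refine h4.congr_deriv ?_
    push_cast
    field_simp
    ring
  have hφ'd : ∀ x : ℝ, HasDerivAt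
      (fun x : ℝ => (x - x₀) - (x - x₀)^2/(2*(x₁ - x₀)) - (x₁ - x₀)/3)
      (1 - (x - x₀)/(x₁ - x₀)) x := by
    intro x
    have h1 : HasDerivAt (fun x : ℝ => x - x₀) 1 x := (hasDerivAt_id x).sub_const x₀
    have h2 : HasDerivAt (fun x : ℝ => (x - x₀)^2) ((2:ℕ)*(x - x₀)^1*1) x := h1.pow 2
    have h4 := (h1.sub (h2.div_const (2*(x₁ - x₀)))).sub_const ((x₁ - x₀)/3)
    refine h4.congr_deriv ?_
    push_cast
    field_simp
  have hibp := ibp_weight f f' f'' x₀ x₁ hx hf' hf'' hf''c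
      (fun x => (x - x₀)^2/2 - (x - x₀)^3/(6*(x₁ - x₀)) - (x₁ - x₀)*(x - x₀)/3)
      (fun x => (x - x₀) - (x - x₀)^2/(2*(x₁ - x₀)) - (x₁ - x₀)/3)
      (fun x => 1 - (x - x₀)/(x₁ - x₀)) (by fun_prop) hφd hφ'd
      (by simp) (by field_simp; ring)
  beta_reduce at hibp
  have Iφ : ∫ x in x₀..x₁,
      ((x - x₀)^2/2 - (x - x₀)^3/(6*(x₁ - x₀)) - (x₁ - x₀)*(x - x₀)/3)
      = -((x₁ - x₀)^3/24) := by
    have e : ∀ x ∈ Set.uIcc x₀ x₁,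
        (x - x₀)^2/2 - (x - x₀)^3/(6*(x₁ - x₀)) - (x₁ - x₀)*(x - x₀)/3
        = (x₀^2/2 + x₀^3/(6*(x₁ - x₀)) + (x₁ - x₀)*x₀/3)
          + (-x₀ - x₀^2/(2*(x₁ - x₀)) - (x₁ - x₀)/3)*x
          + (1/2 + x₀/(2*(x₁ - x₀)))*x^2 + (-(1/(6*(x₁ - x₀))))*x^3 + 0*x^4 := by
      intro x _; field_simp; ring
    rw [intervalIntegral.integral_congr e, integral_poly4]
    field_simp
    ring
  set aI := ∫ x in x₀..x₁,
    f'' x * ((x - x₀)^2/2 - (x - x₀)^3/(6*(x₁ - x₀)) - (x₁ - x₀)*(x - x₀)/3) with haI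
  obtain ⟨η₀, hm, he⟩ := weighted_mvt f''
      (fun t => -((t - x₀)^2/2 - (t - x₀)^3/(6*(x₁ - x₀)) - (x₁ - x₀)*(t - x₀)/3))
      x₀ x₁ (-24*aI/(x₁ - x₀)^3) hx hf''c
      (by apply Continuous.continuousOn; fun_prop)
      (by
        intro t ht
        beta_reduce
        have h1 : (0:ℝ) < t - x₀ := sub_pos.mpr ht.1
        have h2 : (0:ℝ) < x₁ - t := sub_pos.mpr ht.2
        have h0 : (0:ℝ) < x₁ - x₀ := sub_pos.mpr hx
        have e : -((t - x₀)^2/2 - (t - x₀)^3/(6*(x₁ - x₀)) - (x₁ - x₀)*(t - x₀)/3)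
            = (t - x₀)*(x₁ - t)*(2*x₁ - x₀ - t)/(6*(x₁ - x₀)) := by
          field_simp; ring
        rw [e]
        apply div_pos
        · apply mul_pos (mul_pos h1 h2); linarith
        · linarith)
      (by
        beta_reduce
        have l1 : (∫ t in x₀..x₁, f'' t
            * -((t - x₀)^2/2 - (t - x₀)^3/(6*(x₁ - x₀)) - (x₁ - x₀)*(t - x₀)/3)) = -aI := by
          rw [haI, ← intervalIntegral.integral_neg]
          apply intervalIntegral.integral_congr
          intro t _; ring
        have l2 : (∫ t in x₀..x₁,
            -((t - x₀)^2/2 - (t - x₀)^3/(6*(x₁ - x₀)) - (x₁ - x₀)*(t - x₀)/3))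
            = (x₁ - x₀)^3/24 := by
          rw [intervalIntegral.integral_neg, Iφ]; ring
        rw [l1, l2]
        field_simp)
  refine ⟨η₀, hm, ?_⟩
  rw [hibp, he]
  field_simp

private lemma weight_b (f f' f'' : ℝ → ℝ) (x₀ x₁ : ℝ) (hx : x₀ < x₁)
    (hf' : ∀ x ∈ Set.Icc x₀ x₁, HasDerivWithinAt f (f' x) (Set.Icc x₀ x₁) x)
    (hf'' : ∀ x ∈ Set.Icc x₀ x₁, HasDerivWithinAt f' (f'' x) (Set.Icc x₀ x₁) x)
    (hf''c : ContinuousOn f'' (Set.Icc x₀ x₁)) :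
    ∃ η₁ ∈ Set.Ioo x₀ x₁,
      ∫ x in x₀..x₁,
          (f x - (f x₀ * (1 - (x - x₀) / (x₁ - x₀)) + f x₁ * ((x - x₀) / (x₁ - x₀))))
            * ((x - x₀) / (x₁ - x₀))
        = -(f'' η₁) * (x₁ - x₀)^3 / 24 := by
  have hne : x₁ - x₀ ≠ 0 := ne_of_gt (sub_pos.mpr hx)
  have hφd : ∀ x : ℝ, HasDerivAt
      (fun x : ℝ => (x - x₀)^3/(6*(x₁ - x₀)) - (x₁ - x₀)*(x - x₀)/6)
      ((x - x₀)^2/(2*(x₁ - x₀)) - (x₁ - x₀)/6) x := by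
    intro x
    have h1 : HasDerivAt (fun x : ℝ => x - x₀) 1 x := (hasDerivAt_id x).sub_const x₀
    have h3 : HasDerivAt (fun x : ℝ => (x - x₀)^3) ((3:ℕ)*(x - x₀)^2*1) x := h1.pow 3
    have h4 := (h3.div_const (6*(x₁ - x₀))).sub ((h1.const_mul (x₁ - x₀)).div_const 6)
    refine h4.congr_deriv ?_
    push_cast
    field_simp
    ring
  have hφ'd : ∀ x : ℝ, HasDerivAt
      (fun x : ℝ => (x - x₀)^2/(2*(x₁ - x₀)) - (x₁ - x₀)/6)
      ((x - x₀)/(x₁ - x₀)) x := by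
    intro x
    have h1 : HasDerivAt (fun x : ℝ => x - x₀) 1 x := (hasDerivAt_id x).sub_const x₀
    have h2 : HasDerivAt (fun x : ℝ => (x - x₀)^2) ((2:ℕ)*(x - x₀)^1*1) x := h1.pow 2
    have h4 := (h2.div_const (2*(x₁ - x₀))).sub_const ((x₁ - x₀)/6)
    refine h4.congr_deriv ?_
    push_cast
    field_simp
  have hibp := ibp_weight f f' f'' x₀ x₁ hx hf' hf'' hf''c
      (fun x => (x - x₀)^3/(6*(x₁ - x₀)) - (x₁ - x₀)*(x - x₀)/6)
      (fun x => (x - x₀)^2/(2*(x₁ - x₀)) - (x₁ - x₀)/6)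
      (fun x => (x - x₀)/(x₁ - x₀)) (by fun_prop) hφd hφ'd
      (by simp) (by field_simp; ring)
  beta_reduce at hibp
  have Iφ : ∫ x in x₀..x₁,
      ((x - x₀)^3/(6*(x₁ - x₀)) - (x₁ - x₀)*(x - x₀)/6)
      = -((x₁ - x₀)^3/24) := by
    have e : ∀ x ∈ Set.uIcc x₀ x₁,
        (x - x₀)^3/(6*(x₁ - x₀)) - (x₁ - x₀)*(x - x₀)/6
        = (-(x₀^3/(6*(x₁ - x₀))) + (x₁ - x₀)*x₀/6)
          + (x₀^2/(2*(x₁ - x₀)) - (x₁ - x₀)/6)*x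
          + (-(x₀/(2*(x₁ - x₀))))*x^2 + (1/(6*(x₁ - x₀)))*x^3 + 0*x^4 := by
      intro x _; field_simp; ring
    rw [intervalIntegral.integral_congr e, integral_poly4]
    field_simp
    ring
  set aI := ∫ x in x₀..x₁,
    f'' x * ((x - x₀)^3/(6*(x₁ - x₀)) - (x₁ - x₀)*(x - x₀)/6) with haI
  obtain ⟨η₁, hm, he⟩ := weighted_mvt f''
      (fun t => -((t - x₀)^3/(6*(x₁ - x₀)) - (x₁ - x₀)*(t - x₀)/6))
      x₀ x₁ (-24*aI/(x₁ - x₀)^3) hx hf''c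
      (by apply Continuous.continuousOn; fun_prop)
      (by
        intro t ht
        beta_reduce
        have h1 : (0:ℝ) < t - x₀ := sub_pos.mpr ht.1
        have h2 : (0:ℝ) < x₁ - t := sub_pos.mpr ht.2
        have h0 : (0:ℝ) < x₁ - x₀ := sub_pos.mpr hx
        have e : -((t - x₀)^3/(6*(x₁ - x₀)) - (x₁ - x₀)*(t - x₀)/6)
            = (t - x₀)*(x₁ - t)*(t + x₁ - 2*x₀)/(6*(x₁ - x₀)) := by
          field_simp; ring
        rw [e]
        apply div_pos
        · apply mul_pos (mul_pos h1 h2); linarith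
        · linarith)
      (by
        beta_reduce
        have l1 : (∫ t in x₀..x₁, f'' t
            * -((t - x₀)^3/(6*(x₁ - x₀)) - (x₁ - x₀)*(t - x₀)/6)) = -aI := by
          rw [haI, ← intervalIntegral.integral_neg]
          apply intervalIntegral.integral_congr
          intro t _; ring
        have l2 : (∫ t in x₀..x₁,
            -((t - x₀)^3/(6*(x₁ - x₀)) - (x₁ - x₀)*(t - x₀)/6))
            = (x₁ - x₀)^3/24 := by
          rw [intervalIntegral.integral_neg, Iφ]; ring
        rw [l1, l2]
        field_simp)
  refine ⟨η₁, hm, ?_⟩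
  rw [hibp, he]
  field_simp

private lemma sq_error_mvt (f f' f'' : ℝ → ℝ) (x₀ x₁ : ℝ) (hx : x₀ < x₁)
    (hf' : ∀ x ∈ Set.Icc x₀ x₁, HasDerivWithinAt f (f' x) (Set.Icc x₀ x₁) x)
    (hf'' : ∀ x ∈ Set.Icc x₀ x₁, HasDerivWithinAt f' (f'' x) (Set.Icc x₀ x₁) x)
    (hf''c : ContinuousOn f'' (Set.Icc x₀ x₁)) :
    ∃ η ∈ Set.Ioo x₀ x₁,
      ∫ x in x₀..x₁,
          (f x - (f x₀ * (1 - (x - x₀) / (x₁ - x₀)) + f x₁ * ((x - x₀) / (x₁ - x₀))))^2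
        = (f'' η)^2 * ((x₁ - x₀)^5 / 120) := by
  have hne : x₁ - x₀ ≠ 0 := ne_of_gt (sub_pos.mpr hx)
  have h5 : (0:ℝ) < (x₁ - x₀)^5 := pow_pos (sub_pos.mpr hx) 5
  have huicc : Set.uIcc x₀ x₁ = Set.Icc x₀ x₁ := Set.uIcc_of_le hx.le
  have hfc : ContinuousOn f (Set.Icc x₀ x₁) := fun y hy => (hf' y hy).continuousWithinAt
  have hrc : ContinuousOn (fun x =>
      (f x - (f x₀ * (1 - (x - x₀) / (x₁ - x₀)) + f x₁ * ((x - x₀) / (x₁ - x₀))))^2)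
      (Set.Icc x₀ x₁) := by
    apply ContinuousOn.pow
    apply hfc.sub; apply Continuous.continuousOn; fun_prop
  set IR := ∫ x in x₀..x₁,
    (f x - (f x₀ * (1 - (x - x₀) / (x₁ - x₀)) + f x₁ * ((x - x₀) / (x₁ - x₀))))^2 with hIRdef
  set c₂ := 120 * IR / (x₁ - x₀)^5 with hc₂
  suffices hη : ∃ η ∈ Set.Ioo x₀ x₁, (f'' η)^2 = c₂ by
    obtain ⟨η, hη, he⟩ := hη
    refine ⟨η, hη, ?_⟩
    rw [he, hc₂]
    field_simp
  have Iw : ∫ x in x₀..x₁, ((x - x₀)*(x - x₁))^2 = (x₁ - x₀)^5/30 := by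
    have e : ∀ x ∈ Set.uIcc x₀ x₁, ((x - x₀)*(x - x₁))^2
        = (x₀^2*x₁^2) + (-2*(x₀+x₁)*x₀*x₁)*x + ((x₀+x₁)^2 + 2*x₀*x₁)*x^2
          + (-2*(x₀+x₁))*x^3 + 1*x^4 := fun x _ => by ring
    rw [intervalIntegral.integral_congr e, integral_poly4]
    ring
  have iw2 : IntervalIntegrable (fun x => c₂/4 * ((x - x₀)*(x - x₁))^2) volume x₀ x₁ := by
    apply Continuous.intervalIntegrable; fun_prop
  have ir2 : IntervalIntegrable (fun x =>
      (f x - (f x₀ * (1 - (x - x₀) / (x₁ - x₀)) + f x₁ * ((x - x₀) / (x₁ - x₀))))^2)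
      volume x₀ x₁ := ContinuousOn.intervalIntegrable (by rw [huicc]; exact hrc)
  have hzero : ∫ x in x₀..x₁,
      ((f x - (f x₀ * (1 - (x - x₀) / (x₁ - x₀)) + f x₁ * ((x - x₀) / (x₁ - x₀))))^2
        - c₂/4 * ((x - x₀)*(x - x₁))^2) = 0 := by
    rw [intervalIntegral.integral_sub ir2 iw2, intervalIntegral.integral_const_mul, Iw,
        ← hIRdef, hc₂]
    field_simp
    ring
  by_contra hno
  push_neg at hno
  have hdich : (∀ t ∈ Set.Ioo x₀ x₁, c₂ < (f'' t)^2)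
      ∨ (∀ t ∈ Set.Ioo x₀ x₁, (f'' t)^2 < c₂) := by
    by_cases hall : ∀ t ∈ Set.Ioo x₀ x₁, c₂ < (f'' t)^2
    · exact Or.inl hall
    · right
      push_neg at hall
      obtain ⟨s, hs, hsle⟩ := hall
      have hslt : (f'' s)^2 < c₂ := lt_of_le_of_ne hsle (hno s hs)
      intro t ht
      by_contra htle
      push_neg at htle
      have htlt : c₂ < (f'' t)^2 := lt_of_le_of_ne htle (fun e => hno t ht e.symm)
      have hgc : ContinuousOn (fun t => (f'' t)^2) (Set.Icc x₀ x₁) := hf''c.pow 2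
      rcases lt_trichotomy s t with hst | hst | hst
      · have hsub : Set.Icc s t ⊆ Set.Icc x₀ x₁ := Set.Icc_subset_Icc hs.1.le ht.2.le
        obtain ⟨η, hη, hgη⟩ := intermediate_value_Icc hst.le (hgc.mono hsub)
          ⟨hslt.le, htlt.le⟩
        exact hno η ⟨lt_of_lt_of_le hs.1 hη.1, lt_of_le_of_lt hη.2 ht.2⟩ hgη
      · subst hst; exact absurd hslt (not_lt.mpr htlt.le)
      · have hsub : Set.Icc t s ⊆ Set.Icc x₀ x₁ := Set.Icc_subset_Icc ht.1.le hs.2.le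
        obtain ⟨η, hη, hgη⟩ := intermediate_value_Icc' hst.le (hgc.mono hsub)
          ⟨hslt.le, htlt.le⟩
        exact hno η ⟨lt_of_lt_of_le ht.1 hη.1, lt_of_le_of_lt hη.2 hs.2⟩ hgη
  rcases hdich with hcase | hcase
  · have hpos : ∀ x ∈ Set.Ioo x₀ x₁, 0 <
        (f x - (f x₀ * (1 - (x - x₀) / (x₁ - x₀)) + f x₁ * ((x - x₀) / (x₁ - x₀))))^2
          - c₂/4 * ((x - x₀)*(x - x₁))^2 := by
      intro x hxm
      obtain ⟨ξ, hξm, hrx⟩ := interp_error f f' f'' x₀ x₁ hx hf' hf'' x hxm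
      rw [hrx]
      have hw : (x - x₀)*(x - x₁) < 0 :=
        mul_neg_of_pos_of_neg (sub_pos.mpr hxm.1) (sub_neg.mpr hxm.2)
      have h1 : 0 < ((f'' ξ)^2 - c₂) * (((x - x₀)*(x - x₁))*((x - x₀)*(x - x₁))) :=
        mul_pos (sub_pos.mpr (hcase ξ hξm)) (mul_pos_of_neg_of_neg hw hw)
      nlinarith [h1]
    have := intervalIntegral_pos_of_pos_on (ir2.sub iw2) hpos hx
    exact absurd hzero (ne_of_gt this)
  · have hpos : ∀ x ∈ Set.Ioo x₀ x₁, 0 <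
        c₂/4 * ((x - x₀)*(x - x₁))^2
          - (f x - (f x₀ * (1 - (x - x₀) / (x₁ - x₀)) + f x₁ * ((x - x₀) / (x₁ - x₀))))^2 := by
      intro x hxm
      obtain ⟨ξ, hξm, hrx⟩ := interp_error f f' f'' x₀ x₁ hx hf' hf'' x hxm
      rw [hrx]
      have hw : (x - x₀)*(x - x₁) < 0 :=
        mul_neg_of_pos_of_neg (sub_pos.mpr hxm.1) (sub_neg.mpr hxm.2)
      have h1 : 0 < (c₂ - (f'' ξ)^2) * (((x - x₀)*(x - x₁))*((x - x₀)*(x - x₁))) :=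
        mul_pos (sub_pos.mpr (hcase ξ hξm)) (mul_pos_of_neg_of_neg hw hw)
      nlinarith [h1]
    have hgt := intervalIntegral_pos_of_pos_on (iw2.sub ir2) hpos hx
    rw [intervalIntegral.integral_sub iw2 ir2] at hgt
    rw [intervalIntegral.integral_sub ir2 iw2] at hzero
    linarith

/-- minimum squared L² error of a free line segment over an interval. -/
theorem best_line_segment_sq_error
    (f f' f'' : ℝ → ℝ) (x₀ x₁ : ℝ) (hx : x₀ < x₁)
    (hf' : ∀ x ∈ Set.Icc x₀ x₁, HasDerivWithinAt f (f' x) (Set.Icc x₀ x₁) x)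
    (hf'' : ∀ x ∈ Set.Icc x₀ x₁, HasDerivWithinAt f' (f'' x) (Set.Icc x₀ x₁) x)
    (hf''c : ContinuousOn f'' (Set.Icc x₀ x₁)) :
    ∃ η ∈ Set.Ioo x₀ x₁, ∃ η₀ ∈ Set.Ioo x₀ x₁, ∃ η₁ ∈ Set.Ioo x₀ x₁,
      IsLeast
        {e : ℝ | ∃ d₀ d₁ : ℝ, e = ∫ x in x₀..x₁,
          (f x - ((f x₀ + d₀) * (1 - (x - x₀) / (x₁ - x₀))
                   + (f x₁ + d₁) * ((x - x₀) / (x₁ - x₀))))^2}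
        ((x₁ - x₀)^5 / 120 * (f'' η)^2
          - (x₁ - x₀)^5 / 144 * ((f'' η₀)^2 + (f'' η₁)^2 - f'' η₀ * f'' η₁)) := by
  have hne : x₁ - x₀ ≠ 0 := ne_of_gt (sub_pos.mpr hx)
  have hfc : ContinuousOn f (Set.Icc x₀ x₁) := fun y hy => (hf' y hy).continuousWithinAt
  obtain ⟨η, hηm, hIR⟩ := sq_error_mvt f f' f'' x₀ x₁ hx hf' hf'' hf''c
  obtain ⟨η₀, hη₀m, ha⟩ := weight_a f f' f'' x₀ x₁ hx hf' hf'' hf''c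
  obtain ⟨η₁, hη₁m, hb⟩ := weight_b f f' f'' x₀ x₁ hx hf' hf'' hf''c
  set A := ∫ x in x₀..x₁, f x * (1 - (x - x₀) / (x₁ - x₀)) with hAdef
  set B := ∫ x in x₀..x₁, f x * ((x - x₀) / (x₁ - x₀)) with hBdef
  have ha2 : ∫ x in x₀..x₁,
      (f x - (f x₀ * (1 - (x - x₀) / (x₁ - x₀)) + f x₁ * ((x - x₀) / (x₁ - x₀))))
        * (1 - (x - x₀) / (x₁ - x₀))
      = A - (x₁ - x₀)/6*(2*f x₀ + f x₁) := by
    rw [hAdef]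
    calc ∫ x in x₀..x₁,
        (f x - (f x₀ * (1 - (x - x₀) / (x₁ - x₀)) + f x₁ * ((x - x₀) / (x₁ - x₀))))
          * (1 - (x - x₀) / (x₁ - x₀))
        = ∫ x in x₀..x₁,
            (f x - (f x₀ * (1 - (x - x₀) / (x₁ - x₀)) + f x₁ * ((x - x₀) / (x₁ - x₀))))
              * (1 * (1 - (x - x₀) / (x₁ - x₀)) + 0 * ((x - x₀) / (x₁ - x₀))) :=
          intervalIntegral.integral_congr (fun x _ => by ring)
      _ = 1 * (∫ x in x₀..x₁, f x * (1 - (x - x₀) / (x₁ - x₀)))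
            + 0 * (∫ x in x₀..x₁, f x * ((x - x₀) / (x₁ - x₀)))
            - (x₁ - x₀)/6 * (1*(2*f x₀ + f x₁) + 0*(f x₀ + 2*f x₁)) :=
          lin_expand f x₀ x₁ hx hfc (f x₀) (f x₁) 1 0
      _ = (∫ x in x₀..x₁, f x * (1 - (x - x₀) / (x₁ - x₀))) - (x₁ - x₀)/6*(2*f x₀ + f x₁) := by
          ring
  have hb2 : ∫ x in x₀..x₁,
      (f x - (f x₀ * (1 - (x - x₀) / (x₁ - x₀)) + f x₁ * ((x - x₀) / (x₁ - x₀))))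
        * ((x - x₀) / (x₁ - x₀))
      = B - (x₁ - x₀)/6*(f x₀ + 2*f x₁) := by
    rw [hBdef]
    calc ∫ x in x₀..x₁,
        (f x - (f x₀ * (1 - (x - x₀) / (x₁ - x₀)) + f x₁ * ((x - x₀) / (x₁ - x₀))))
          * ((x - x₀) / (x₁ - x₀))
        = ∫ x in x₀..x₁,
            (f x - (f x₀ * (1 - (x - x₀) / (x₁ - x₀)) + f x₁ * ((x - x₀) / (x₁ - x₀))))
              * (0 * (1 - (x - x₀) / (x₁ - x₀)) + 1 * ((x - x₀) / (x₁ - x₀))) :=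
          intervalIntegral.integral_congr (fun x _ => by ring)
      _ = 0 * (∫ x in x₀..x₁, f x * (1 - (x - x₀) / (x₁ - x₀)))
            + 1 * (∫ x in x₀..x₁, f x * ((x - x₀) / (x₁ - x₀)))
            - (x₁ - x₀)/6 * (0*(2*f x₀ + f x₁) + 1*(f x₀ + 2*f x₁)) :=
          lin_expand f x₀ x₁ hx hfc (f x₀) (f x₁) 0 1
      _ = (∫ x in x₀..x₁, f x * ((x - x₀) / (x₁ - x₀))) - (x₁ - x₀)/6*(f x₀ + 2*f x₁) := by
          ring
  have hAe : A = -(f'' η₀) * (x₁ - x₀)^3 / 24 + (x₁ - x₀)/6*(2*f x₀ + f x₁) := by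
    rw [ha] at ha2; linarith
  have hBe : B = -(f'' η₁) * (x₁ - x₀)^3 / 24 + (x₁ - x₀)/6*(f x₀ + 2*f x₁) := by
    rw [hb] at hb2; linarith
  have hrr := quad_expand f x₀ x₁ hx hfc (f x₀) (f x₁)
  rw [← hAdef, ← hBdef] at hrr
  have hF2e : (∫ x in x₀..x₁, (f x)^2)
      = (f'' η)^2 * ((x₁ - x₀)^5 / 120) + 2*(f x₀)*A + 2*(f x₁)*B
        - (x₁ - x₀)/3*((f x₀)^2 + (f x₀)*(f x₁) + (f x₁)^2) := by
    rw [hIR] at hrr; linarith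
  set P := (4*A - 2*B)/(x₁ - x₀) with hPdef
  set Q := (4*B - 2*A)/(x₁ - x₀) with hQdef
  have hP6 : (x₁ - x₀)*(2*P + Q) = 6*A := by rw [hPdef, hQdef]; field_simp; ring
  have hQ6 : (x₁ - x₀)*(P + 2*Q) = 6*B := by rw [hPdef, hQdef]; field_simp; ring
  have hTE : (x₁ - x₀)^5 / 120 * (f'' η)^2
      - (x₁ - x₀)^5 / 144 * ((f'' η₀)^2 + (f'' η₁)^2 - f'' η₀ * f'' η₁)
      = (∫ x in x₀..x₁, (f x)^2) - 2*P*A - 2*Q*B + (x₁ - x₀)/3*(P^2 + P*Q + Q^2) := by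
    rw [hPdef, hQdef, hF2e, hAe, hBe]
    field_simp
    ring
  refine ⟨η, hηm, η₀, hη₀m, η₁, hη₁m, ⟨P - f x₀, Q - f x₁, ?_⟩, ?_⟩
  · rw [hTE]
    rw [show (∫ x in x₀..x₁,
        (f x - ((f x₀ + (P - f x₀)) * (1 - (x - x₀) / (x₁ - x₀))
          + (f x₁ + (Q - f x₁)) * ((x - x₀) / (x₁ - x₀))))^2)
        = ∫ x in x₀..x₁,
          (f x - (P * (1 - (x - x₀) / (x₁ - x₀)) + Q * ((x - x₀) / (x₁ - x₀))))^2 from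
      intervalIntegral.integral_congr (fun x _ => by ring)]
    rw [quad_expand f x₀ x₁ hx hfc P Q, ← hAdef, ← hBdef]
  · rintro e ⟨d₀, d₁, rfl⟩
    rw [hTE, quad_expand f x₀ x₁ hx hfc (f x₀ + d₀) (f x₁ + d₁), ← hAdef, ← hBdef]
    have key : ((∫ x in x₀..x₁, (f x)^2) - 2*(f x₀ + d₀)*A - 2*(f x₁ + d₁)*B
          + (x₁ - x₀)/3*((f x₀ + d₀)^2 + (f x₀ + d₀)*(f x₁ + d₁) + (f x₁ + d₁)^2))
        - ((∫ x in x₀..x₁, (f x)^2) - 2*P*A - 2*Q*B + (x₁ - x₀)/3*(P^2 + P*Q + Q^2))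
        = (x₁ - x₀)/3 * (((f x₀ + d₀) - P)^2 + ((f x₀ + d₀) - P)*((f x₁ + d₁) - Q)
            + ((f x₁ + d₁) - Q)^2) := by
      linear_combination (((f x₀ + d₀) - P)/3) * hP6 + (((f x₁ + d₁) - Q)/3) * hQ6
    have hΔ : 0 ≤ ((f x₀ + d₀) - P)^2 + ((f x₀ + d₀) - P)*((f x₁ + d₁) - Q)
        + ((f x₁ + d₁) - Q)^2 := by
      nlinarith [sq_nonneg (2*((f x₀ + d₀) - P) + ((f x₁ + d₁) - Q)),
        sq_nonneg ((f x₁ + d₁) - Q)]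
    have h3 : (0:ℝ) ≤ (x₁ - x₀)/3 := by linarith
    have := mul_nonneg h3 hΔ
    linarith
end

section
/- Let f be C² on [a,b] and a = x₀ < x₁ < ... < x_N = b a partition with hᵢ = xᵢ − x_{i−1} and Mᵢ = max_{x∈[x_{i−1},xᵢ]} |f''(x)|. If Mᵢ · hᵢ^{5/2} ≤ C for all i, then the piecewise linear interpolant π f satisfies ‖f − π f‖²_{L²([a,b])} ≤ C²·N/120. -/
open MeasureTheory Set intervalIntegral

lemma poly_integral (α β : ℝ) :
    ∫ t in α..β, ((t - α) * (β - t))^2 = (β - α)^5 / 30 := by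
  have h : ∀ t ∈ Set.uIcc α β, HasDerivAt
      (fun t => (β-α)^2*(t-α)^3/3 - (β-α)*(t-α)^4/2 + (t-α)^5/5)
      (((t - α) * (β - t))^2) t := by
    intro t _
    have hid : HasDerivAt (fun s : ℝ => s - α) 1 t := (hasDerivAt_id t).sub_const α
    have h3 := ((hid.pow 3).const_mul ((β-α)^2)).div_const 3
    have h4 := ((hid.pow 4).const_mul (β-α)).div_const 2
    have h5 := (hid.pow 5).div_const 5
    have := (h3.sub h4).add h5
    convert this using 1
    · rfl
    · rfl
    · rfl
    · ring
  rw [intervalIntegral.integral_eq_sub_of_hasDerivAt h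
    (by apply Continuous.intervalIntegrable; fun_prop)]
  ring

lemma key (f f' f'' : ℝ → ℝ) (a b : ℝ)
    (hf' : ∀ x ∈ Set.Icc a b, HasDerivWithinAt f (f' x) (Set.Icc a b) x)
    (hf'' : ∀ x ∈ Set.Icc a b, HasDerivWithinAt f' (f'' x) (Set.Icc a b) x)
    (α β : ℝ) (hαβ : α < β) (haα : a ≤ α) (hβb : β ≤ b)
    (c d : ℝ) (hcα : f α = c * α + d) (hcβ : f β = c * β + d)
    (M : ℝ) (hM : ∀ s ∈ Set.Icc α β, |f'' s| ≤ M)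
    (t : ℝ) (ht : t ∈ Set.Icc α β) :
    (f t - (c * t + d))^2 ≤ M^2/4 * ((t-α)*(β-t))^2 := by
  have hsub : Set.Icc α β ⊆ Set.Icc a b := Set.Icc_subset_Icc haα hβb
  have hM0 : 0 ≤ M := le_trans (abs_nonneg _) (hM α ⟨le_rfl, hαβ.le⟩)
  rcases eq_or_lt_of_le ht.1 with h1 | h1
  · rw [← h1, ← hcα]; simp
  rcases eq_or_lt_of_le ht.2 with h2 | h2
  · rw [h2, ← hcβ]; simp
  -- interior case
  have cf : ContinuousOn f (Set.Icc a b) := fun s hs => (hf' s hs).continuousWithinAt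
  have hderiv1 : ∀ s ∈ Set.Ioo α β, HasDerivAt f (f' s) s := by
    intro s hs
    exact (hf' s (hsub (Set.Ioo_subset_Icc_self hs))).hasDerivAt
      (Icc_mem_nhds (lt_of_le_of_lt haα hs.1) (lt_of_lt_of_le hs.2 hβb))
  have hderiv2 : ∀ s ∈ Set.Ioo α β, HasDerivAt f' (f'' s) s := by
    intro s hs
    exact (hf'' s (hsub (Set.Ioo_subset_Icc_self hs))).hasDerivAt
      (Icc_mem_nhds (lt_of_le_of_lt haα hs.1) (lt_of_lt_of_le hs.2 hβb))
  set wt : ℝ := (t - α) * (β - t) with hwt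
  have hwt0 : 0 < wt := by
    apply mul_pos <;> [linarith [h1]; linarith [h2]]
  set K : ℝ := (f t - (c * t + d)) / wt with hK
  set φ : ℝ → ℝ := fun s => f s - (c * s + d) - K * ((s - α) * (β - s)) with hφ
  set ψ : ℝ → ℝ := fun s => f' s - c - K * (α + β - 2 * s) with hψ
  have hφd : ∀ s ∈ Set.Ioo α β, HasDerivAt φ (ψ s) s := by
    intro s hs
    have hw : HasDerivAt (fun s : ℝ => (s - α) * (β - s)) (α + β - 2 * s) s := by
      have := ((hasDerivAt_id s).sub_const α).mul ((hasDerivAt_const s β).sub (hasDerivAt_id s))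
      convert this using 1
      · rfl
      · rfl
      · rfl
      · simp only [Pi.sub_apply, id_eq]; ring
    have hl : HasDerivAt (fun s : ℝ => c * s + d) c s := by
      simpa using ((hasDerivAt_id s).const_mul c).add_const d
    have := ((hderiv1 s hs).sub hl).sub (hw.const_mul K)
    convert this using 1
    · rfl
    · rfl
    · rfl
  have hψd : ∀ s ∈ Set.Ioo α β, HasDerivAt ψ (f'' s + 2 * K) s := by
    intro s hs
    have hl := (((hasDerivAt_const s (α+β)).sub ((hasDerivAt_id s).const_mul 2))).const_mul K
    have := ((hderiv2 s hs).sub_const c).sub hl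
    convert this using 1
    · rfl
    · rfl
    · rfl
    · ring
  have hφcont : ContinuousOn φ (Set.Icc α β) := by
    apply ContinuousOn.sub
    · exact (cf.mono hsub).sub (Continuous.continuousOn (by fun_prop))
    · exact Continuous.continuousOn (by fun_prop)
  have hφα : φ α = 0 := by simp [hφ, ← hcα]
  have hφβ : φ β = 0 := by simp only [hφ]; rw [← hcβ]; ring
  have hφt : φ t = 0 := by
    simp only [hφ, hK, ← hwt]
    field_simp
    ring
  obtain ⟨ξ₁, hξ₁, hψξ₁⟩ := exists_hasDerivAt_eq_zero h1
    (hφcont.mono (Set.Icc_subset_Icc le_rfl ht.2)) (hφα.trans hφt.symm)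
    (fun s hs => hφd s (Set.Ioo_subset_Ioo le_rfl ht.2 hs))
  obtain ⟨ξ₂, hξ₂, hψξ₂⟩ := exists_hasDerivAt_eq_zero h2
    (hφcont.mono (Set.Icc_subset_Icc ht.1 le_rfl)) (hφt.trans hφβ.symm)
    (fun s hs => hφd s (Set.Ioo_subset_Ioo ht.1 le_rfl hs))
  have hξ12 : ξ₁ < ξ₂ := lt_trans hξ₁.2 hξ₂.1
  have hsub2 : Set.Icc ξ₁ ξ₂ ⊆ Set.Ioo α β :=
    fun s hs => ⟨lt_of_lt_of_le hξ₁.1 hs.1, lt_of_le_of_lt hs.2 hξ₂.2⟩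
  obtain ⟨ξ, hξ, hξ0⟩ := exists_hasDerivAt_eq_zero hξ12
    (fun s hs => ((hψd s (hsub2 hs)).continuousAt).continuousWithinAt)
    (hψξ₁.trans hψξ₂.symm)
    (fun s hs => hψd s (hsub2 (Set.Ioo_subset_Icc_self hs)))
  have hξmem : ξ ∈ Set.Icc α β := Set.Ioo_subset_Icc_self
    ((Set.Ioo_subset_Ioo hξ₁.1.le hξ₂.2.le) hξ)
  have hKval : K = -(f'' ξ) / 2 := by linarith
  have herr : f t - (c * t + d) = K * wt := by
    rw [hK, div_mul_cancel₀ _ (ne_of_gt hwt0)]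
  rw [herr]
  have hMξ : |f'' ξ| ≤ M := hM ξ hξmem
  have h2 : (f'' ξ)^2 ≤ M^2 := by
    rw [← sq_abs]; exact pow_le_pow_left₀ (abs_nonneg _) hMξ 2
  rw [hKval]
  nlinarith [sq_nonneg wt, sq_nonneg (f'' ξ), mul_pos hwt0 hwt0]

/-- if Mᵢ·hᵢ^{5/2} ≤ C on every subinterval then the total squared L²
interpolation error is at most C²·N/120. -/
theorem pwl_interpolant_equalized_error_bound
    (f f' f'' : ℝ → ℝ) (a b : ℝ) (hab : a < b) (N : ℕ) (hN : 1 ≤ N)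
    (hf' : ∀ x ∈ Set.Icc a b, HasDerivWithinAt f (f' x) (Set.Icc a b) x)
    (hf'' : ∀ x ∈ Set.Icc a b, HasDerivWithinAt f' (f'' x) (Set.Icc a b) x)
    (hf''c : ContinuousOn f'' (Set.Icc a b))
    (x : Fin (N + 1) → ℝ) (hmono : StrictMono x)
    (hx0 : x 0 = a) (hxN : x (Fin.last N) = b)
    (p : ℝ → ℝ)
    (hinterp : ∀ i, p (x i) = f (x i))
    (haff : ∀ k : Fin N, ∃ c d : ℝ,
      ∀ t ∈ Set.Icc (x k.castSucc) (x k.succ), p t = c * t + d)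
    (M : Fin N → ℝ)
    (hMk : ∀ k : Fin N,
      IsGreatest ((fun t => |f'' t|) '' Set.Icc (x k.castSucc) (x k.succ)) (M k))
    (C : ℝ)
    (hC : ∀ k : Fin N, M k * (x k.succ - x k.castSucc) ^ ((5 : ℝ) / 2) ≤ C) :
    (∫ t in a..b, (f t - p t)^2) ≤ C^2 * N / 120 := by
  have cf : ContinuousOn f (Set.Icc a b) := fun s hs => (hf' s hs).continuousWithinAt
  -- basic facts per subinterval
  have haK : ∀ k : Fin N, a ≤ x k.castSucc := by
    intro k; rw [← hx0]; exact hmono.monotone (Fin.zero_le _)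
  have hKb : ∀ k : Fin N, x k.succ ≤ b := by
    intro k; rw [← hxN]; exact hmono.monotone (Fin.le_last _)
  have hlt : ∀ k : Fin N, x k.castSucc < x k.succ :=
    fun k => hmono (Fin.castSucc_lt_succ : k.castSucc < k.succ)
  -- per-subinterval bound
  have hbound : ∀ k : Fin N,
      (∫ t in (x k.castSucc)..(x k.succ), (f t - p t)^2) ≤ C^2/120 := by
    intro k
    obtain ⟨c, d, hcd⟩ := haff k
    set α := x k.castSucc
    set β := x k.succ
    have hαβ : α < β := hlt k
    have hsub : Set.Icc α β ⊆ Set.Icc a b := Set.Icc_subset_Icc (haK k) (hKb k)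
    have hMnn : 0 ≤ M k := by
      obtain ⟨t, _, ht⟩ := (hMk k).1
      rw [← ht]; exact abs_nonneg _
    have hMle : ∀ s ∈ Set.Icc α β, |f'' s| ≤ M k :=
      fun s hs => (hMk k).2 ⟨s, hs, rfl⟩
    have hcα : f α = c * α + d := by
      rw [← hinterp k.castSucc]; exact hcd α ⟨le_rfl, hαβ.le⟩
    have hcβ : f β = c * β + d := by
      rw [← hinterp k.succ]; exact hcd β ⟨hαβ.le, le_rfl⟩
    have hcongr : (∫ t in α..β, (f t - p t)^2) = ∫ t in α..β, (f t - (c*t+d))^2 := by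
      apply intervalIntegral.integral_congr
      intro t ht
      rw [Set.uIcc_of_le hαβ.le] at ht
      simp only [hcd t ht]
    rw [hcongr]
    have hle : ∀ t ∈ Set.Icc α β,
        (f t - (c*t+d))^2 ≤ (M k)^2/4 * ((t-α)*(β-t))^2 :=
      fun t ht => key f f' f'' a b hf' hf'' α β hαβ (haK k) (hKb k) c d hcα hcβ
        (M k) hMle t ht
    have hint1 : IntervalIntegrable (fun t => (f t - (c*t+d))^2) volume α β := by
      apply ContinuousOn.intervalIntegrable
      rw [Set.uIcc_of_le hαβ.le]
      exact ((cf.mono hsub).sub (Continuous.continuousOn (by fun_prop))).pow 2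
    have hint2 : IntervalIntegrable (fun t => (M k)^2/4 * ((t-α)*(β-t))^2) volume α β := by
      apply Continuous.intervalIntegrable; fun_prop
    have hmono2 := intervalIntegral.integral_mono_on hαβ.le hint1 hint2 hle
    have hIcalc : (∫ t in α..β, (M k)^2/4 * ((t-α)*(β-t))^2)
        = (M k)^2 * (β-α)^5 / 120 := by
      rw [intervalIntegral.integral_const_mul, poly_integral]
      ring
    have h5 : ((β-α) ^ ((5:ℝ)/2))^(2:ℕ) = (β-α)^(5:ℕ) := by
      rw [← Real.rpow_natCast ((β-α) ^ ((5:ℝ)/2)) 2,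
        ← Real.rpow_mul (by linarith : (0:ℝ) ≤ β - α),
        ← Real.rpow_natCast (β-α) 5]
      norm_num
    have hsq : (M k * (β-α) ^ ((5:ℝ)/2))^2 ≤ C^2 := by
      exact pow_le_pow_left₀ (mul_nonneg hMnn (Real.rpow_nonneg (by linarith) _)) (hC k) 2
    rw [mul_pow] at hsq
    rw [h5] at hsq
    calc (∫ t in α..β, (f t - (c*t+d))^2) ≤ (M k)^2 * (β-α)^5 / 120 := by
          rw [← hIcalc]; exact hmono2
      _ ≤ C^2/120 := by linarith
  -- integrability per subinterval
  have hint : ∀ k : Fin N,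
      IntervalIntegrable (fun t => (f t - p t)^2) volume (x k.castSucc) (x k.succ) := by
    intro k
    obtain ⟨c, d, hcd⟩ := haff k
    set α := x k.castSucc
    set β := x k.succ
    have hαβ : α < β := hlt k
    have hsub : Set.Icc α β ⊆ Set.Icc a b := Set.Icc_subset_Icc (haK k) (hKb k)
    rw [intervalIntegrable_iff]
    have hg : IntegrableOn (fun t => (f t - (c*t+d))^2) (Set.uIoc α β) volume := by
      apply MeasureTheory.IntegrableOn.mono_set
        (((((cf.mono hsub).sub (Continuous.continuousOn (by fun_prop))).pow 2).integrableOn_Icc))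
      rw [Set.uIoc_of_le hαβ.le]
      exact Set.Ioc_subset_Icc_self
    apply hg.congr_fun _ measurableSet_uIoc
    intro t ht
    rw [Set.uIoc_of_le hαβ.le] at ht
    simp only [hcd t (Set.Ioc_subset_Icc_self ht)]
  -- split integral
  set y : ℕ → ℝ := fun i => x ⟨min i N, Nat.lt_succ_of_le (min_le_right _ _)⟩ with hy
  have hyk : ∀ k : Fin N, y k.val = x k.castSucc ∧ y (k.val + 1) = x k.succ := by
    intro k
    constructor
    · show x _ = _
      congr 1
      exact Fin.ext (Nat.min_eq_left k.isLt.le)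
    · show x _ = _
      congr 1
      exact Fin.ext (Nat.min_eq_left k.isLt)
  have h0 : y 0 = a := by
    show x _ = a; rw [← hx0]; congr 1
  have hNb : y N = b := by
    show x _ = b; rw [← hxN]; congr 1; exact Fin.ext (by simp [Fin.last])
  have hsplit : (∫ t in a..b, (f t - p t)^2)
      = ∑ k ∈ Finset.range N, ∫ t in (y k)..(y (k+1)), (f t - p t)^2 := by
    rw [← h0, ← hNb]
    refine (intervalIntegral.sum_integral_adjacent_intervals ?_).symm
    intro k hk
    have h1 := (hyk ⟨k, hk⟩).1
    have h2 := (hyk ⟨k, hk⟩).2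
    simp only at h1 h2
    rw [h1, h2]
    exact hint ⟨k, hk⟩
  rw [hsplit]
  calc (∑ k ∈ Finset.range N, ∫ t in (y k)..(y (k+1)), (f t - p t)^2)
      ≤ ∑ k ∈ Finset.range N, C^2/120 := by
        apply Finset.sum_le_sum
        intro k hk
        rw [Finset.mem_range] at hk
        have h1 := (hyk ⟨k, hk⟩).1
        have h2 := (hyk ⟨k, hk⟩).2
        simp only at h1 h2
        rw [h1, h2]
        exact hbound ⟨k, hk⟩
    _ = C^2 * N / 120 := by
        rw [Finset.sum_const, Finset.card_range, nsmul_eq_mul]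
        ring
end

section
/- Let f be C² on [x₀−h, x₀+h] with |f''| ≤ K. Consider on each of I⁻ = [x₀−h, x₀] and I⁺ = [x₀, x₀+h] the independently L²-optimal affine approximations ℓ⁻ and ℓ⁺ of f. Then the jump at the common knot satisfies |ℓ⁻(x₀) − ℓ⁺(x₀)| ≤ K·h²/2. In particular the discontinuity vanishes as h → 0. -/
open MeasureTheory Set intervalIntegral


private lemma poly_int (p q α β γ δ : ℝ) :
    (∫ t in p..q, (α*t^3+β*t^2+γ*t+δ)) =
      α*(q^4-p^4)/4 + β*(q^3-p^3)/3 + γ*(q^2-p^2)/2 + δ*(q-p) := by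
  have hF : ∀ t : ℝ, HasDerivAt (fun t => α*t^4/4+β*t^3/3+γ*t^2/2+δ*t)
      (α*t^3+β*t^2+γ*t+δ) t := by
    intro t
    have h4 : HasDerivAt (fun t : ℝ => α*t^4/4) (α*t^3) t := by
      simpa using (((hasDerivAt_pow 4 t).const_mul α).div_const 4).congr_deriv (by ring)
    have h3 : HasDerivAt (fun t : ℝ => β*t^3/3) (β*t^2) t := by
      simpa using (((hasDerivAt_pow 3 t).const_mul β).div_const 3).congr_deriv (by ring)
    have h2 : HasDerivAt (fun t : ℝ => γ*t^2/2) (γ*t) t := by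
      simpa using (((hasDerivAt_pow 2 t).const_mul γ).div_const 2).congr_deriv (by ring)
    have h1 : HasDerivAt (fun t : ℝ => δ*t) δ t := by
      simpa using (hasDerivAt_id t).const_mul δ
    exact ((h4.add h3).add h2).add h1
  rw [intervalIntegral.integral_eq_sub_of_hasDerivAt (fun t _ => hF t)
    ((by fun_prop : Continuous fun t : ℝ => α*t^3+β*t^2+γ*t+δ).intervalIntegrable p q)]
  ring

/-- One-sided estimate: on `[0,h]`, if `φ` is within `K/2·t²` of the line `A + B·t`
and `ℓ` is the L²-best affine approximation, then `|ℓ 0 - A| ≤ (59/324)·K·h²`. -/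
private lemma side_estimate (φ : ℝ → ℝ) (h K A B : ℝ) (hh : 0 < h) (hK0 : 0 ≤ K)
    (hcont : ContinuousOn φ (Icc 0 h))
    (htay : ∀ t ∈ Icc (0:ℝ) h, |φ t - (A + B*t)| ≤ K/2*t^2)
    (ℓ : ℝ → ℝ) (hℓex : ∃ c d : ℝ, ∀ t, ℓ t = c*t+d)
    (hmin : ∀ c d : ℝ, (∫ t in (0:ℝ)..h, (φ t - ℓ t)^2)
      ≤ ∫ t in (0:ℝ)..h, (φ t - (c*t+d))^2) :
    |ℓ 0 - A| ≤ 59/324 * K * h^2 := by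
  obtain ⟨c₀, d₀, hℓ⟩ := hℓex
  have hne : h ≠ 0 := hh.ne'
  have hcu : ContinuousOn φ (uIcc 0 h) := by rwa [uIcc_of_le hh.le]
  have hℓc : Continuous ℓ := by
    have : ℓ = fun t => c₀*t+d₀ := funext hℓ
    rw [this]; fun_prop
  -- orthogonality
  have ortho : ∀ c d : ℝ, (∫ t in (0:ℝ)..h, (φ t - ℓ t)*(c*t+d)) = 0 := by
    intro c d
    have hgc : Continuous fun t : ℝ => c*t+d := by fun_prop
    have hint0 : IntervalIntegrable (fun t => (φ t - ℓ t)^2) volume 0 h :=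
      (((hcu.sub hℓc.continuousOn).pow 2)).intervalIntegrable
    have hint1 : IntervalIntegrable (fun t => (φ t - ℓ t)*(c*t+d)) volume 0 h :=
      ((hcu.sub hℓc.continuousOn).mul hgc.continuousOn).intervalIntegrable
    have hint2 : IntervalIntegrable (fun t => (c*t+d)^2) volume 0 h :=
      (hgc.pow 2).intervalIntegrable 0 h
    set Aq := ∫ t in (0:ℝ)..h, (φ t - ℓ t)*(c*t+d) with hAq
    set Bq := ∫ t in (0:ℝ)..h, (c*t+d)^2 with hBq
    have hBq0 : 0 ≤ Bq :=
      intervalIntegral.integral_nonneg hh.le (fun t _ => sq_nonneg _)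
    have key : ∀ ε : ℝ, 0 ≤ ε^2*Bq - 2*ε*Aq := by
      intro ε
      have h1 := hmin (c₀ + ε*c) (d₀ + ε*d)
      have expand : (∫ t in (0:ℝ)..h, (φ t - ((c₀+ε*c)*t + (d₀+ε*d)))^2)
          = (∫ t in (0:ℝ)..h, (φ t - ℓ t)^2) - 2*ε*Aq + ε^2*Bq := by
        have heq : ∀ t : ℝ, (φ t - ((c₀+ε*c)*t + (d₀+ε*d)))^2
            = ((φ t - ℓ t)^2 - 2*ε*((φ t - ℓ t)*(c*t+d))) + ε^2*((c*t+d)^2) := by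
          intro t; rw [hℓ]; ring
        rw [intervalIntegral.integral_congr (g := fun t =>
            ((φ t - ℓ t)^2 - 2*ε*((φ t - ℓ t)*(c*t+d))) + ε^2*((c*t+d)^2))
            (fun t _ => heq t)]
        rw [intervalIntegral.integral_add (hint0.sub (hint1.const_mul (2*ε)))
            (hint2.const_mul (ε^2)),
          intervalIntegral.integral_sub hint0 (hint1.const_mul (2*ε)),
          intervalIntegral.integral_const_mul, intervalIntegral.integral_const_mul]
      rw [expand] at h1
      linarith
    set ε := Aq/(Bq+1) with hε
    have hεA : ε*(Bq+1) = Aq := by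
      rw [hε]; field_simp
    have h2 := key ε
    rw [← hεA] at h2
    have hε2 : ε^2 = 0 := by
      nlinarith [mul_nonneg (sq_nonneg ε) hBq0, sq_nonneg ε]
    have hε0 : ε = 0 := sq_eq_zero_iff.mp hε2
    rw [← hεA, hε0, zero_mul]
  -- kernel reproduces affine value at 0
  have K1 : ∀ c d : ℝ, (∫ t in (0:ℝ)..h, (c*t+d)*(4-6*t/h)) = h*d := by
    intro c d
    have heq : ∀ t : ℝ, (c*t+d)*(4-6*t/h)
        = (-(6*c/h))*t^3*0 + (-(6*c/h))*t^2 + (4*c-6*d/h)*t + 4*d := by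
      intro t; field_simp; ring
    rw [intervalIntegral.integral_congr (g := fun t =>
        (0:ℝ)*t^3 + (-(6*c/h))*t^2 + (4*c-6*d/h)*t + 4*d)
        (fun t _ => by rw [heq t]; ring), poly_int]
    field_simp; ring
  -- key identity
  have hker : h * (ℓ 0 - A) = ∫ t in (0:ℝ)..h, (φ t - (A + B*t))*(4-6*t/h) := by
    have hpc : Continuous fun t : ℝ => 4-6*t/h := by fun_prop
    have i1 : IntervalIntegrable (fun t => (φ t - ℓ t)*((-6/h)*t+4)) volume 0 h :=
      ((hcu.sub hℓc.continuousOn).mul (by fun_prop : Continuous fun t : ℝ =>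
        (-6/h)*t+4).continuousOn).intervalIntegrable
    have i2 : IntervalIntegrable (fun t => ((c₀-B)*t + (d₀-A))*(4-6*t/h)) volume 0 h :=
      ((by fun_prop : Continuous fun t : ℝ =>
        ((c₀-B)*t + (d₀-A))*(4-6*t/h))).intervalIntegrable 0 h
    have split : (∫ t in (0:ℝ)..h, (φ t - (A + B*t))*(4-6*t/h))
        = (∫ t in (0:ℝ)..h, (φ t - ℓ t)*((-6/h)*t+4))
          + ∫ t in (0:ℝ)..h, ((c₀-B)*t + (d₀-A))*(4-6*t/h) := by
      rw [← intervalIntegral.integral_add i1 i2]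
      apply intervalIntegral.integral_congr
      intro t _
      simp only [hℓ]
      field_simp
      ring
    rw [split, ortho (-6/h) 4, K1 (c₀-B) (d₀-A), hℓ 0]
    ring
  -- the absolute-kernel integral bound
  have habs : |∫ t in (0:ℝ)..h, (φ t - (A + B*t))*(4-6*t/h)| ≤ 59/324*K*h^3 := by
    set m : ℝ := 2*h/3 with hm
    have hm0 : 0 ≤ m := by positivity
    have hmh : m ≤ h := by rw [hm]; linarith
    have hcont1 : ContinuousOn (fun t => (φ t - (A + B*t))*(4-6*t/h)) (Icc 0 h) :=
      (hcont.sub (by fun_prop : Continuous fun t : ℝ => A + B*t).continuousOn).mul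
        (by fun_prop : Continuous fun t : ℝ => 4-6*t/h).continuousOn
    have iF1 : IntervalIntegrable (fun t => (φ t - (A + B*t))*(4-6*t/h)) volume 0 m :=
      (hcont1.mono (by rw [uIcc_of_le hm0]; exact Icc_subset_Icc le_rfl hmh)).intervalIntegrable
    have iF2 : IntervalIntegrable (fun t => (φ t - (A + B*t))*(4-6*t/h)) volume m h :=
      (hcont1.mono (by rw [uIcc_of_le hmh]; exact Icc_subset_Icc hm0 le_rfl)).intervalIntegrable
    have hadj := intervalIntegral.integral_add_adjacent_intervals iF1 iF2
    rw [← hadj]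
    -- piece 1
    have hb1 : |∫ t in (0:ℝ)..m, (φ t - (A + B*t))*(4-6*t/h)| ≤ 4*K*h^3/81 := by
      have hGint : IntervalIntegrable (fun t => K/2*t^2*(4-6*t/h)) volume 0 m :=
        ((by fun_prop : Continuous fun t : ℝ => K/2*t^2*(4-6*t/h))).intervalIntegrable 0 m
      have hbd : ∀ t ∈ Set.uIoc (0:ℝ) m, ‖(φ t - (A + B*t))*(4-6*t/h)‖ ≤ K/2*t^2*(4-6*t/h) := by
        intro t ht
        rw [uIoc_of_le hm0] at ht
        have ht1 : t ∈ Icc (0:ℝ) h := ⟨ht.1.le, ht.2.trans hmh⟩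
        have hp0 : 0 ≤ 4-6*t/h := by
          rw [sub_nonneg, div_le_iff₀ hh]
          have := ht.2
          rw [hm] at this
          linarith
        rw [Real.norm_eq_abs, abs_mul, abs_of_nonneg hp0]
        exact mul_le_mul_of_nonneg_right (htay t ht1) hp0
      have hval : (∫ t in (0:ℝ)..m, K/2*t^2*(4-6*t/h)) = 4*K*h^3/81 := by
        have heq : ∀ t : ℝ, K/2*t^2*(4-6*t/h)
            = (-(3*K/h))*t^3 + (2*K)*t^2 + (0:ℝ)*t + 0 := by
          intro t; field_simp; ring
        rw [intervalIntegral.integral_congr (g := fun t =>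
            (-(3*K/h))*t^3 + (2*K)*t^2 + (0:ℝ)*t + 0) (fun t _ => heq t), poly_int, hm]
        field_simp
        ring
      calc |∫ t in (0:ℝ)..m, (φ t - (A + B*t))*(4-6*t/h)|
          ≤ |∫ t in (0:ℝ)..m, K/2*t^2*(4-6*t/h)| :=
            intervalIntegral.norm_integral_le_abs_of_norm_le
              (MeasureTheory.ae_restrict_of_forall_mem measurableSet_uIoc hbd) hGint
        _ = 4*K*h^3/81 := by rw [hval, abs_of_nonneg (by positivity)]
    -- piece 2
    have hb2 : |∫ t in m..h, (φ t - (A + B*t))*(4-6*t/h)| ≤ 43*K*h^3/324 := by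
      have hGint : IntervalIntegrable (fun t => K/2*t^2*(6*t/h-4)) volume m h :=
        ((by fun_prop : Continuous fun t : ℝ => K/2*t^2*(6*t/h-4))).intervalIntegrable m h
      have hbd : ∀ t ∈ Set.uIoc m h, ‖(φ t - (A + B*t))*(4-6*t/h)‖ ≤ K/2*t^2*(6*t/h-4) := by
        intro t ht
        rw [uIoc_of_le hmh] at ht
        have ht1 : t ∈ Icc (0:ℝ) h := ⟨hm0.trans ht.1.le, ht.2⟩
        have hp0 : 4-6*t/h ≤ 0 := by
          rw [sub_nonpos, le_div_iff₀ hh]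
          have := ht.1.le
          rw [hm] at this
          linarith
        rw [Real.norm_eq_abs, abs_mul, abs_of_nonpos hp0]
        have : -(4-6*t/h) = 6*t/h - 4 := by ring
        rw [this]
        exact mul_le_mul_of_nonneg_right (htay t ht1) (by linarith)
      have hval : (∫ t in m..h, K/2*t^2*(6*t/h-4)) = 43*K*h^3/324 := by
        have heq : ∀ t : ℝ, K/2*t^2*(6*t/h-4)
            = (3*K/h)*t^3 + (-(2*K))*t^2 + (0:ℝ)*t + 0 := by
          intro t; field_simp; ring
        rw [intervalIntegral.integral_congr (g := fun t =>
            (3*K/h)*t^3 + (-(2*K))*t^2 + (0:ℝ)*t + 0) (fun t _ => heq t), poly_int, hm]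
        field_simp
        ring
      calc |∫ t in m..h, (φ t - (A + B*t))*(4-6*t/h)|
          ≤ |∫ t in m..h, K/2*t^2*(6*t/h-4)| :=
            intervalIntegral.norm_integral_le_abs_of_norm_le
              (MeasureTheory.ae_restrict_of_forall_mem measurableSet_uIoc hbd) hGint
        _ = 43*K*h^3/324 := by rw [hval, abs_of_nonneg (by positivity)]
    calc |(∫ t in (0:ℝ)..m, (φ t - (A + B*t))*(4-6*t/h))
            + ∫ t in m..h, (φ t - (A + B*t))*(4-6*t/h)|
        ≤ |∫ t in (0:ℝ)..m, (φ t - (A + B*t))*(4-6*t/h)|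
            + |∫ t in m..h, (φ t - (A + B*t))*(4-6*t/h)| := abs_add_le _ _
      _ ≤ 4*K*h^3/81 + 43*K*h^3/324 := add_le_add hb1 hb2
      _ = 59/324*K*h^3 := by ring
  -- conclude
  have hfin : h * |ℓ 0 - A| ≤ h * (59/324 * K * h^2) := by
    have habs2 : |h * (ℓ 0 - A)| ≤ 59/324*K*h^3 := by rw [hker]; exact habs
    rw [abs_mul, abs_of_pos hh] at habs2
    nlinarith [habs2]
  exact le_of_mul_le_mul_left hfin hh

private lemma poly_lin (p q γ δ : ℝ) :
    (∫ t in p..q, (γ*t+δ)) = γ*(q^2-p^2)/2 + δ*(q-p) := by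
  rw [intervalIntegral.integral_congr (g := fun t => (0:ℝ)*t^3+(0:ℝ)*t^2+γ*t+δ)
    (fun t _ => by ring)]
  rw [poly_int]
  ring

private lemma taylor_bd (f f' f'' : ℝ → ℝ) (a b x₀ K : ℝ) (hx : x₀ ∈ Icc a b)
    (hf' : ∀ x ∈ Icc a b, HasDerivWithinAt f (f' x) (Icc a b) x)
    (hf'' : ∀ x ∈ Icc a b, HasDerivWithinAt f' (f'' x) (Icc a b) x)
    (hK : ∀ x ∈ Icc a b, |f'' x| ≤ K) :
    ∀ t ∈ Icc a b, |f t - (f x₀ + f' x₀ * (t - x₀))| ≤ K/2 * (t - x₀)^2 := by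
  have hK0 : 0 ≤ K := (abs_nonneg _).trans (hK x₀ hx)
  have hlip : ∀ s ∈ Icc a b, |f' s - f' x₀| ≤ K * |s - x₀| := by
    intro s hs
    simpa [Real.norm_eq_abs] using
      Convex.norm_image_sub_le_of_norm_hasDerivWithin_le hf''
        (fun x hxm => by simpa [Real.norm_eq_abs] using hK x hxm)
        (convex_Icc a b) hx hs
  have hfc : ContinuousOn f (Icc a b) := fun x hxm => (hf' x hxm).continuousWithinAt
  have hf'c : ContinuousOn f' (Icc a b) := fun x hxm => (hf'' x hxm).continuousWithinAt
  have ftc : ∀ p q : ℝ, p ∈ Icc a b → q ∈ Icc a b → p ≤ q →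
      (∫ s in p..q, f' s) = f q - f p := by
    intro p q hp hq hpq
    apply integral_eq_sub_of_hasDeriv_right_of_le hpq
      (hfc.mono (Icc_subset_Icc hp.1 hq.2))
    · intro x hxm
      have hxab : x ∈ Ioo a b := ⟨hp.1.trans_lt hxm.1, hxm.2.trans_le hq.2⟩
      exact ((hf' x (Ioo_subset_Icc_self hxab)).hasDerivAt
        (Icc_mem_nhds hxab.1 hxab.2)).hasDerivWithinAt
    · exact (hf'c.mono (by rw [uIcc_of_le hpq]; exact Icc_subset_Icc hp.1 hq.2)).intervalIntegrable
  intro t ht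
  have hint' : ∀ p q : ℝ, p ∈ Icc a b → q ∈ Icc a b → p ≤ q →
      IntervalIntegrable (fun s => f' s - f' x₀) volume p q := by
    intro p q hp hq hpq
    exact ((hf'c.mono (by rw [uIcc_of_le hpq]; exact Icc_subset_Icc hp.1 hq.2)).sub
      continuousOn_const).intervalIntegrable
  rcases le_total x₀ t with hc | hc
  · have h1 : (∫ s in x₀..t, (f' s - f' x₀)) = f t - (f x₀ + f' x₀ * (t - x₀)) := by
      rw [intervalIntegral.integral_sub
        ((hf'c.mono (by rw [uIcc_of_le hc]; exact Icc_subset_Icc hx.1 ht.2)).intervalIntegrable)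
        (intervalIntegrable_const),
        ftc x₀ t hx ht hc, intervalIntegral.integral_const]
      ring_nf
    have h2 : ‖∫ s in x₀..t, (f' s - f' x₀)‖ ≤ |∫ s in x₀..t, K*(s - x₀)| := by
      apply intervalIntegral.norm_integral_le_abs_of_norm_le
      · apply MeasureTheory.ae_restrict_of_forall_mem measurableSet_uIoc
        intro s hs
        rw [uIoc_of_le hc] at hs
        have hs1 : s ∈ Icc a b := ⟨hx.1.trans hs.1.le, hs.2.trans ht.2⟩
        have := hlip s hs1
        rw [Real.norm_eq_abs]
        calc |f' s - f' x₀| ≤ K * |s - x₀| := this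
          _ = K * (s - x₀) := by rw [abs_of_nonneg (by linarith [hs.1.le])]
      · exact ((by fun_prop : Continuous fun s : ℝ => K*(s-x₀))).intervalIntegrable x₀ t
    have h3 : (∫ s in x₀..t, K*(s - x₀)) = K/2 * (t - x₀)^2 := by
      rw [intervalIntegral.integral_congr (g := fun s => K*s + (-(K*x₀)))
        (fun s _ => by ring), poly_lin]
      ring
    calc |f t - (f x₀ + f' x₀ * (t - x₀))| = ‖∫ s in x₀..t, (f' s - f' x₀)‖ := by
          rw [Real.norm_eq_abs, h1]
      _ ≤ |∫ s in x₀..t, K*(s - x₀)| := h2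
      _ = K/2 * (t - x₀)^2 := by
          rw [h3]; exact abs_of_nonneg (mul_nonneg (by linarith) (sq_nonneg _))
  · have h1 : (∫ s in t..x₀, (f' s - f' x₀)) = (f x₀ + f' x₀ * (t - x₀)) - f t := by
      rw [intervalIntegral.integral_sub
        ((hf'c.mono (by rw [uIcc_of_le hc]; exact Icc_subset_Icc ht.1 hx.2)).intervalIntegrable)
        (intervalIntegrable_const),
        ftc t x₀ ht hx hc, intervalIntegral.integral_const]
      rw [smul_eq_mul]
      ring
    have h2 : ‖∫ s in t..x₀, (f' s - f' x₀)‖ ≤ |∫ s in t..x₀, K*(x₀ - s)| := by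
      apply intervalIntegral.norm_integral_le_abs_of_norm_le
      · apply MeasureTheory.ae_restrict_of_forall_mem measurableSet_uIoc
        intro s hs
        rw [uIoc_of_le hc] at hs
        have hs1 : s ∈ Icc a b := ⟨ht.1.trans hs.1.le, hs.2.trans hx.2⟩
        have := hlip s hs1
        rw [Real.norm_eq_abs]
        calc |f' s - f' x₀| ≤ K * |s - x₀| := this
          _ = K * (x₀ - s) := by rw [abs_of_nonpos (by linarith [hs.2]), neg_sub]
      · exact ((by fun_prop : Continuous fun s : ℝ => K*(x₀-s))).intervalIntegrable t x₀
    have h3 : (∫ s in t..x₀, K*(x₀ - s)) = K/2 * (t - x₀)^2 := by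
      rw [intervalIntegral.integral_congr (g := fun s => (-K)*s + K*x₀)
        (fun s _ => by ring), poly_lin]
      ring
    calc |f t - (f x₀ + f' x₀ * (t - x₀))| = ‖∫ s in t..x₀, (f' s - f' x₀)‖ := by
          rw [Real.norm_eq_abs, h1, abs_sub_comm]
      _ ≤ |∫ s in t..x₀, K*(x₀ - s)| := h2
      _ = K/2 * (t - x₀)^2 := by
          rw [h3]; exact abs_of_nonneg (mul_nonneg (by linarith) (sq_nonneg _))

/-- the jump at the common knot between the two independently
L²-optimal affine approximations is at most K·h²/2. -/

theorem jump_of_independent_best_segments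
    (f f' f'' : ℝ → ℝ) (x₀ h K : ℝ) (hh : 0 < h)
    (hf' : ∀ x ∈ Set.Icc (x₀ - h) (x₀ + h),
      HasDerivWithinAt f (f' x) (Set.Icc (x₀ - h) (x₀ + h)) x)
    (hf'' : ∀ x ∈ Set.Icc (x₀ - h) (x₀ + h),
      HasDerivWithinAt f' (f'' x) (Set.Icc (x₀ - h) (x₀ + h)) x)
    (hf''c : ContinuousOn f'' (Set.Icc (x₀ - h) (x₀ + h)))
    (hK : ∀ x ∈ Set.Icc (x₀ - h) (x₀ + h), |f'' x| ≤ K)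
    (ℓm ℓp : ℝ → ℝ)
    (hℓm : ∃ c d : ℝ, ∀ t : ℝ, ℓm t = c * t + d)
    (hℓp : ∃ c d : ℝ, ∀ t : ℝ, ℓp t = c * t + d)
    (hmin_m : ∀ c d : ℝ,
      (∫ t in (x₀ - h)..x₀, (f t - ℓm t)^2) ≤ ∫ t in (x₀ - h)..x₀, (f t - (c * t + d))^2)
    (hmin_p : ∀ c d : ℝ,
      (∫ t in x₀..(x₀ + h), (f t - ℓp t)^2) ≤ ∫ t in x₀..(x₀ + h), (f t - (c * t + d))^2) :
    |ℓm x₀ - ℓp x₀| ≤ K * h^2 / 2 := by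
  have hx : x₀ ∈ Icc (x₀-h) (x₀+h) := ⟨by linarith, by linarith⟩
  have hK0 : 0 ≤ K := (abs_nonneg _).trans (hK x₀ hx)
  have htay := taylor_bd f f' f'' (x₀-h) (x₀+h) x₀ K hx hf' hf'' hK
  have hfc : ContinuousOn f (Icc (x₀-h) (x₀+h)) := fun x hxm => (hf' x hxm).continuousWithinAt
  -- plus side
  have hplus : |ℓp x₀ - f x₀| ≤ 59/324 * K * h^2 := by
    obtain ⟨c, d, hcd⟩ := hℓp
    have hres := side_estimate (fun t => f (x₀ + t)) h K (f x₀) (f' x₀) hh hK0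
      (by
        apply hfc.comp (Continuous.continuousOn (by fun_prop))
        intro t ht
        exact ⟨by linarith [ht.1], by linarith [ht.2]⟩)
      (by
        intro t ht
        have h1 := htay (x₀+t) ⟨by linarith [ht.1], by linarith [ht.2]⟩
        have e : f x₀ + f' x₀ * ((x₀+t) - x₀) = f x₀ + f' x₀ * t := by ring
        have e2 : ((x₀+t) - x₀)^2 = t^2 := by ring
        rw [e, e2] at h1
        exact h1)
      (fun t => ℓp (x₀ + t))
      ⟨c, c*x₀+d, fun t => by show ℓp (x₀+t) = c*t + (c*x₀+d); rw [hcd]; ring⟩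
      (by
        intro c' d'
        have e1 : (∫ t in (0:ℝ)..h, (f (x₀+t) - ℓp (x₀+t))^2)
            = ∫ t in x₀..(x₀+h), (f t - ℓp t)^2 := by
          have key := intervalIntegral.integral_comp_add_left
            (a := (0:ℝ)) (b := h) (fun s => (f s - ℓp s)^2) x₀
          simp only [add_zero] at key
          exact key
        have e2 : (∫ t in (0:ℝ)..h, (f (x₀+t) - (c'*t + d'))^2)
            = ∫ t in x₀..(x₀+h), (f t - (c'*t + (d' - c'*x₀)))^2 := by
          have key := intervalIntegral.integral_comp_add_left
            (a := (0:ℝ)) (b := h) (fun s => (f s - (c'*s + (d'-c'*x₀)))^2) x₀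
          simp only [add_zero] at key
          rw [← key]
          apply intervalIntegral.integral_congr
          intro t _
          show (f (x₀+t) - (c'*t + d'))^2 = (f (x₀+t) - (c'*(x₀+t) + (d'-c'*x₀)))^2
          ring
        rw [e1, e2]
        exact hmin_p c' (d' - c'*x₀))
    simpa using hres
  -- minus side
  have hminus : |ℓm x₀ - f x₀| ≤ 59/324 * K * h^2 := by
    obtain ⟨c, d, hcd⟩ := hℓm
    have hres := side_estimate (fun t => f (x₀ - t)) h K (f x₀) (-(f' x₀)) hh hK0
      (by
        apply hfc.comp (Continuous.continuousOn (by fun_prop))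
        intro t ht
        exact ⟨by linarith [ht.2], by linarith [ht.1]⟩)
      (by
        intro t ht
        have h1 := htay (x₀-t) ⟨by linarith [ht.2], by linarith [ht.1]⟩
        have e : f x₀ + f' x₀ * ((x₀-t) - x₀) = f x₀ + (-(f' x₀)) * t := by ring
        have e2 : ((x₀-t) - x₀)^2 = t^2 := by ring
        rw [e, e2] at h1
        exact h1)
      (fun t => ℓm (x₀ - t))
      ⟨-c, c*x₀+d, fun t => by show ℓm (x₀-t) = -c*t + (c*x₀+d); rw [hcd]; ring⟩
      (by
        intro c' d'
        have e1 : (∫ t in (0:ℝ)..h, (f (x₀-t) - ℓm (x₀-t))^2)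
            = ∫ t in (x₀-h)..x₀, (f t - ℓm t)^2 := by
          have key := intervalIntegral.integral_comp_sub_left
            (a := (0:ℝ)) (b := h) (fun s => (f s - ℓm s)^2) x₀
          simp only [sub_zero] at key
          exact key
        have e2 : (∫ t in (0:ℝ)..h, (f (x₀-t) - (c'*t + d'))^2)
            = ∫ t in (x₀-h)..x₀, (f t - ((-c')*t + (c'*x₀ + d')))^2 := by
          have key := intervalIntegral.integral_comp_sub_left
            (a := (0:ℝ)) (b := h) (fun s => (f s - ((-c')*s + (c'*x₀+d')))^2) x₀
          simp only [sub_zero] at key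
          rw [← key]
          apply intervalIntegral.integral_congr
          intro t _
          show (f (x₀-t) - (c'*t + d'))^2 = (f (x₀-t) - ((-c')*(x₀-t) + (c'*x₀+d')))^2
          ring
        rw [e1, e2]
        exact hmin_m (-c') (c'*x₀ + d'))
    simpa using hres
  have tri : |ℓm x₀ - ℓp x₀| ≤ |ℓm x₀ - f x₀| + |ℓp x₀ - f x₀| := by
    calc |ℓm x₀ - ℓp x₀| ≤ |ℓm x₀ - f x₀| + |f x₀ - ℓp x₀| := abs_sub_le _ _ _
      _ = |ℓm x₀ - f x₀| + |ℓp x₀ - f x₀| := by rw [abs_sub_comm (f x₀)]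
  have hKh : 0 ≤ K * h^2 := mul_nonneg hK0 (sq_nonneg h)
  linarith
end

section
/- Let f be C² on [x₀, x₁], h = x₁ − x₀, t(x) = (x − x₀)/h, and π f the linear interpolant of f. Then there exist η₀, η₁ ∈ (x₀, x₁) such that ∫_{x₀}^{x₁} (f(x) − π f(x))·(1 − t(x)) dx = −(h³/24)·f''(η₀) and ∫_{x₀}^{x₁} (f(x) − π f(x))·t(x) dx = −(h³/24)·f''(η₁). -/
open MeasureTheory Set intervalIntegral

/-- Mean value theorem for integrals against a kernel `G` that is negative on the
open interval: `∫ f'' G = (∫ G) · f'' η` for some interior `η`. -/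
lemma mvt_integral_kernel (f'' G : ℝ → ℝ) (x₀ x₁ : ℝ) (hx : x₀ < x₁)
    (hf''c : ContinuousOn f'' (Set.Icc x₀ x₁)) (hGc : Continuous G)
    (hGneg : ∀ x ∈ Set.Ioo x₀ x₁, G x < 0)
    (hJ : (∫ x in x₀..x₁, G x) = -((x₁ - x₀)^3 / 24)) :
    ∃ η ∈ Set.Ioo x₀ x₁,
      (∫ x in x₀..x₁, f'' x * G x) = -((x₁ - x₀)^3 / 24) * f'' η := by
  have hh : (0:ℝ) < x₁ - x₀ := by linarith
  have hJneg : (∫ x in x₀..x₁, G x) < 0 := by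
    rw [hJ]; nlinarith [pow_pos hh 3]
  set J : ℝ := ∫ x in x₀..x₁, G x with hJdef
  set I : ℝ := ∫ x in x₀..x₁, f'' x * G x with hIdef
  set r : ℝ := I / J with hrdef
  have hJne : J ≠ 0 := ne_of_lt hJneg
  -- continuity facts
  have hcontIcc : ContinuousOn (fun x => (f'' x - r) * G x) (Set.Icc x₀ x₁) :=
    ((hf''c.sub continuousOn_const).mul hGc.continuousOn)
  have hint : IntervalIntegrable (fun x => (f'' x - r) * G x) volume x₀ x₁ := by
    apply ContinuousOn.intervalIntegrable
    rwa [Set.uIcc_of_le hx.le]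
  have hintf''G : IntervalIntegrable (fun x => f'' x * G x) volume x₀ x₁ := by
    apply ContinuousOn.intervalIntegrable
    rw [Set.uIcc_of_le hx.le]
    exact hf''c.mul hGc.continuousOn
  have hintG : IntervalIntegrable G volume x₀ x₁ := hGc.intervalIntegrable _ _
  have hsplit : (∫ x in x₀..x₁, (f'' x - r) * G x) = I - r * J := by
    have : (fun x => (f'' x - r) * G x) = fun x => f'' x * G x - r * G x := by
      funext x; ring
    rw [this, intervalIntegral.integral_sub hintf''G (hintG.const_mul r),
      intervalIntegral.integral_const_mul]
  have hzero : (∫ x in x₀..x₁, (f'' x - r) * G x) = 0 := by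
    rw [hsplit, hrdef]; field_simp; ring
  -- find η with f'' η = r
  have hexists : ∃ η ∈ Set.Ioo x₀ x₁, f'' η = r := by
    by_contra hcon
    push_neg at hcon
    set m : ℝ := (x₀ + x₁) / 2 with hmdef
    have hm : m ∈ Set.Ioo x₀ x₁ := by constructor <;> (simp only [hmdef]; linarith)
    have hioo_icc : Set.Ioo x₀ x₁ ⊆ Set.Icc x₀ x₁ := Set.Ioo_subset_Icc_self
    have hmne := hcon m hm
    -- either f'' > r on Ioo or f'' < r on Ioo
    have hsign : (∀ y ∈ Set.Ioo x₀ x₁, r < f'' y) ∨ (∀ y ∈ Set.Ioo x₀ x₁, f'' y < r) := by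
      rcases lt_or_gt_of_ne hmne with hlt | hgt
      · right
        intro y hy
        rcases lt_or_gt_of_ne (hcon y hy) with h | h
        · exact h
        · exfalso
          have hsub : Set.uIcc m y ⊆ Set.Ioo x₀ x₁ := by
            rw [Set.uIcc_eq_union]
            rintro z (hz | hz)
            · exact ⟨lt_of_lt_of_le hm.1 hz.1, lt_of_le_of_lt hz.2 hy.2⟩
            · exact ⟨lt_of_lt_of_le hy.1 hz.1, lt_of_le_of_lt hz.2 hm.2⟩
          have hc : ContinuousOn f'' (Set.uIcc m y) :=
            hf''c.mono (hsub.trans hioo_icc)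
          have hr : r ∈ Set.uIcc (f'' m) (f'' y) :=
            Set.mem_uIcc.mpr (Or.inl ⟨hlt.le, h.le⟩)
          obtain ⟨z, hz, hzr⟩ := intermediate_value_uIcc hc hr
          exact hcon z (hsub hz) hzr
      · left
        intro y hy
        rcases lt_or_gt_of_ne (hcon y hy) with h | h
        · exfalso
          have hsub : Set.uIcc m y ⊆ Set.Ioo x₀ x₁ := by
            rw [Set.uIcc_eq_union]
            rintro z (hz | hz)
            · exact ⟨lt_of_lt_of_le hm.1 hz.1, lt_of_le_of_lt hz.2 hy.2⟩
            · exact ⟨lt_of_lt_of_le hy.1 hz.1, lt_of_le_of_lt hz.2 hm.2⟩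
          have hc : ContinuousOn f'' (Set.uIcc m y) :=
            hf''c.mono (hsub.trans hioo_icc)
          have hr : r ∈ Set.uIcc (f'' m) (f'' y) :=
            Set.mem_uIcc.mpr (Or.inr ⟨h.le, hgt.le⟩)
          obtain ⟨z, hz, hzr⟩ := intermediate_value_uIcc hc hr
          exact hcon z (hsub hz) hzr
        · exact h
    rcases hsign with hpos | hneg
    · -- (f'' - r) * G < 0 on Ioo, so integral < 0, contradicting = 0
      have : 0 < ∫ x in x₀..x₁, -((f'' x - r) * G x) := by
        apply intervalIntegral.intervalIntegral_pos_of_pos_on hint.neg _ hx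
        intro x hxm
        have h1 := hGneg x hxm
        have h2 := hpos x hxm
        simp only [Pi.neg_apply]
        nlinarith
      rw [intervalIntegral.integral_neg, hzero] at this
      simp at this
    · have : 0 < ∫ x in x₀..x₁, (f'' x - r) * G x := by
        apply intervalIntegral.intervalIntegral_pos_of_pos_on hint _ hx
        intro x hxm
        have := hGneg x hxm
        have := hneg x hxm
        nlinarith
      rw [hzero] at this
      exact lt_irrefl _ this
  obtain ⟨η, hη, hηr⟩ := hexists
  refine ⟨η, hη, ?_⟩
  rw [hηr, hrdef, ← hJ]
  field_simp

/-- Weighted error integral equals `∫ f'' G` by twice integration by parts, then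
apply the integral MVT. -/
lemma weighted_error_integral (f f' f'' : ℝ → ℝ) (x₀ x₁ : ℝ) (hx : x₀ < x₁)
    (hf' : ∀ x ∈ Set.Icc x₀ x₁, HasDerivWithinAt f (f' x) (Set.Icc x₀ x₁) x)
    (hf'' : ∀ x ∈ Set.Icc x₀ x₁, HasDerivWithinAt f' (f'' x) (Set.Icc x₀ x₁) x)
    (hf''c : ContinuousOn f'' (Set.Icc x₀ x₁))
    (c d : ℝ) (p : ℝ → ℝ) (hpfun : ∀ t : ℝ, p t = c * t + d)
    (hp0 : p x₀ = f x₀) (hp1 : p x₁ = f x₁)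
    (w G G' : ℝ → ℝ) (hwc : Continuous w)
    (hGder : ∀ x, HasDerivAt G (G' x) x)
    (hG'der : ∀ x, HasDerivAt G' (w x) x)
    (hG0 : G x₀ = 0) (hG1 : G x₁ = 0)
    (hGneg : ∀ x ∈ Set.Ioo x₀ x₁, G x < 0)
    (hJ : (∫ x in x₀..x₁, G x) = -((x₁ - x₀)^3 / 24)) :
    ∃ η ∈ Set.Ioo x₀ x₁,
      (∫ x in x₀..x₁, (f x - p x) * w x) = -((x₁ - x₀)^3 / 24) * f'' η := by
  have hGc : Continuous G :=
    continuous_iff_continuousAt.mpr fun x => (hGder x).continuousAt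
  have hG'c : Continuous G' :=
    continuous_iff_continuousAt.mpr fun x => (hG'der x).continuousAt
  have hfc : ContinuousOn f (Set.Icc x₀ x₁) :=
    fun x hx' => (hf' x hx').continuousWithinAt
  have hf'c : ContinuousOn f' (Set.Icc x₀ x₁) :=
    fun x hx' => (hf'' x hx').continuousWithinAt
  have hpeq : p = fun t => c * t + d := funext hpfun
  have hpc : Continuous p := by rw [hpeq]; fun_prop
  have hpder : ∀ x : ℝ, HasDerivAt p c x := by
    intro x
    rw [hpeq]
    simpa using ((hasDerivAt_id x).const_mul c).add_const d
  have hfder : ∀ x ∈ Set.Ioo x₀ x₁, HasDerivAt f (f' x) x := fun x hx' =>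
    (hf' x (Set.Ioo_subset_Icc_self hx')).hasDerivAt (Icc_mem_nhds hx'.1 hx'.2)
  have hf'der : ∀ x ∈ Set.Ioo x₀ x₁, HasDerivAt f' (f'' x) x := fun x hx' =>
    (hf'' x (Set.Ioo_subset_Icc_self hx')).hasDerivAt (Icc_mem_nhds hx'.1 hx'.2)
  -- integrability of the pieces
  have hi1 : IntervalIntegrable (fun x => (f' x - c) * G' x) volume x₀ x₁ := by
    apply ContinuousOn.intervalIntegrable
    rw [Set.uIcc_of_le hx.le]
    exact (hf'c.sub continuousOn_const).mul hG'c.continuousOn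
  have hi2 : IntervalIntegrable (fun x => (f x - p x) * w x) volume x₀ x₁ := by
    apply ContinuousOn.intervalIntegrable
    rw [Set.uIcc_of_le hx.le]
    exact (hfc.sub hpc.continuousOn).mul hwc.continuousOn
  have hi3 : IntervalIntegrable (fun x => f'' x * G x) volume x₀ x₁ := by
    apply ContinuousOn.intervalIntegrable
    rw [Set.uIcc_of_le hx.le]
    exact hf''c.mul hGc.continuousOn
  -- first integration by parts
  have h1 : (∫ x in x₀..x₁, ((f' x - c) * G' x + (f x - p x) * w x))
      = (f x₁ - p x₁) * G' x₁ - (f x₀ - p x₀) * G' x₀ := by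
    apply intervalIntegral.integral_eq_sub_of_hasDerivAt_of_le hx.le
    · exact (hfc.sub hpc.continuousOn).mul hG'c.continuousOn
    · intro x hx'
      exact ((hfder x hx').sub (hpder x)).mul (hG'der x)
    · exact hi1.add hi2
  have h1' : (∫ x in x₀..x₁, ((f' x - c) * G' x + (f x - p x) * w x)) = 0 := by
    rw [h1, hp0, hp1]; ring
  -- second integration by parts
  have h2 : (∫ x in x₀..x₁, (f'' x * G x + (f' x - c) * G' x))
      = (f' x₁ - c) * G x₁ - (f' x₀ - c) * G x₀ := by
    apply intervalIntegral.integral_eq_sub_of_hasDerivAt_of_le hx.le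
    · exact (hf'c.sub continuousOn_const).mul hGc.continuousOn
    · intro x hx'
      exact ((hf'der x hx').sub_const c).mul (hGder x)
    · exact hi3.add hi1
  have h2' : (∫ x in x₀..x₁, (f'' x * G x + (f' x - c) * G' x)) = 0 := by
    rw [h2, hG0, hG1]; ring
  rw [intervalIntegral.integral_add hi1 hi2] at h1'
  rw [intervalIntegral.integral_add hi3 hi1] at h2'
  have key : (∫ x in x₀..x₁, (f x - p x) * w x) = ∫ x in x₀..x₁, f'' x * G x := by
    linarith
  obtain ⟨η, hη, hval⟩ := mvt_integral_kernel f'' G x₀ x₁ hx hf''c hGc hGneg hJ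
  exact ⟨η, hη, by rw [key, hval]⟩

/-- weighted integrals of the interpolation error against the two
affine weights 1 - t(x) and t(x) equal -(h³/24)·f''(η₀) and -(h³/24)·f''(η₁). -/
theorem interpolation_error_weighted_integrals
    (f f' f'' : ℝ → ℝ) (x₀ x₁ : ℝ) (hx : x₀ < x₁)
    (hf' : ∀ x ∈ Set.Icc x₀ x₁, HasDerivWithinAt f (f' x) (Set.Icc x₀ x₁) x)
    (hf'' : ∀ x ∈ Set.Icc x₀ x₁, HasDerivWithinAt f' (f'' x) (Set.Icc x₀ x₁) x)
    (hf''c : ContinuousOn f'' (Set.Icc x₀ x₁))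
    (p : ℝ → ℝ) (hpaff : ∃ c d : ℝ, ∀ t : ℝ, p t = c * t + d)
    (hp0 : p x₀ = f x₀) (hp1 : p x₁ = f x₁) :
    ∃ η₀ ∈ Set.Ioo x₀ x₁, ∃ η₁ ∈ Set.Ioo x₀ x₁,
      (∫ x in x₀..x₁, (f x - p x) * (1 - (x - x₀) / (x₁ - x₀)))
        = -((x₁ - x₀)^3 / 24) * f'' η₀ ∧
      (∫ x in x₀..x₁, (f x - p x) * ((x - x₀) / (x₁ - x₀)))
        = -((x₁ - x₀)^3 / 24) * f'' η₁ := by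
  obtain ⟨c, d, hpfun⟩ := hpaff
  have hh : (0:ℝ) < x₁ - x₀ := by linarith
  have hne : x₁ - x₀ ≠ 0 := ne_of_gt hh
  have hb : ∀ x : ℝ, HasDerivAt (fun x => x - x₀) 1 x :=
    fun x => (hasDerivAt_id x).sub_const x₀
  -- First weight
  obtain ⟨η₀, hη₀, heq₀⟩ := weighted_error_integral f f' f'' x₀ x₁ hx hf' hf'' hf''c
    c d p hpfun hp0 hp1
    (fun x => 1 - (x - x₀) / (x₁ - x₀))
    (fun x => (x - x₀)^2/2 - (x - x₀)^3/(6*(x₁ - x₀)) - (x₁ - x₀)*(x - x₀)/3)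
    (fun x => (x - x₀) - (x - x₀)^2/(2*(x₁ - x₀)) - (x₁ - x₀)/3)
    (by fun_prop)
    (by
      intro x
      have h1 := (((hb x).pow 2).div_const 2).sub (((hb x).pow 3).div_const (6*(x₁ - x₀)))
      have h2 := h1.sub (((hb x).const_mul (x₁ - x₀)).div_const 3)
      refine h2.congr_deriv ?_
      field_simp
      ring)
    (by
      intro x
      have h1 := ((hb x).sub (((hb x).pow 2).div_const (2*(x₁ - x₀)))).sub_const ((x₁ - x₀)/3)
      refine h1.congr_deriv ?_
      field_simp
      ring)
    (by simp)
    (by field_simp; ring)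
    (by
      intro x hx'
      obtain ⟨h1, h2⟩ := hx'
      have hfact : (x - x₀)^2/2 - (x - x₀)^3/(6*(x₁ - x₀)) - (x₁ - x₀)*(x - x₀)/3
          = ((x - x₀)*(x₁ - x)*((x - x₀) - 2*(x₁ - x₀)))/(6*(x₁ - x₀)) := by
        field_simp
        ring
      simp only [hfact]
      apply div_neg_of_neg_of_pos
      · apply mul_neg_of_pos_of_neg
        · exact mul_pos (by linarith) (by linarith)
        · linarith
      · linarith)
    (by
      have hH : ∀ x ∈ Set.uIcc x₀ x₁, HasDerivAt
          (fun x => (x - x₀)^3/6 - (x - x₀)^4/(24*(x₁ - x₀)) - (x₁ - x₀)*(x - x₀)^2/6)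
          ((x - x₀)^2/2 - (x - x₀)^3/(6*(x₁ - x₀)) - (x₁ - x₀)*(x - x₀)/3) x := by
        intro x _
        have h1 := (((hb x).pow 3).div_const 6).sub (((hb x).pow 4).div_const (24*(x₁ - x₀)))
        have h2 := h1.sub ((((hb x).pow 2).const_mul (x₁ - x₀)).div_const 6)
        refine h2.congr_deriv ?_
        field_simp
        ring
      rw [intervalIntegral.integral_eq_sub_of_hasDerivAt hH (by apply Continuous.intervalIntegrable; fun_prop)]
      field_simp
      ring)
  -- Second weight
  obtain ⟨η₁, hη₁, heq₁⟩ := weighted_error_integral f f' f'' x₀ x₁ hx hf' hf'' hf''c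
    c d p hpfun hp0 hp1
    (fun x => (x - x₀) / (x₁ - x₀))
    (fun x => (x - x₀)^3/(6*(x₁ - x₀)) - (x₁ - x₀)*(x - x₀)/6)
    (fun x => (x - x₀)^2/(2*(x₁ - x₀)) - (x₁ - x₀)/6)
    (by fun_prop)
    (by
      intro x
      have h1 := (((hb x).pow 3).div_const (6*(x₁ - x₀))).sub
        (((hb x).const_mul (x₁ - x₀)).div_const 6)
      refine h1.congr_deriv ?_
      field_simp
      ring)
    (by
      intro x
      have h1 := (((hb x).pow 2).div_const (2*(x₁ - x₀))).sub_const ((x₁ - x₀)/6)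
      refine h1.congr_deriv ?_
      field_simp
      ring)
    (by simp)
    (by field_simp; ring)
    (by
      intro x hx'
      obtain ⟨h1, h2⟩ := hx'
      have hfact : (x - x₀)^3/(6*(x₁ - x₀)) - (x₁ - x₀)*(x - x₀)/6
          = ((x - x₀)*(x - x₁)*((x - x₀) + (x₁ - x₀)))/(6*(x₁ - x₀)) := by
        field_simp
        ring
      simp only [hfact]
      apply div_neg_of_neg_of_pos
      · apply mul_neg_of_neg_of_pos
        · exact mul_neg_of_pos_of_neg (by linarith) (by linarith)
        · linarith
      · linarith)
    (by
      have hH : ∀ x ∈ Set.uIcc x₀ x₁, HasDerivAt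
          (fun x => (x - x₀)^4/(24*(x₁ - x₀)) - (x₁ - x₀)*(x - x₀)^2/12)
          ((x - x₀)^3/(6*(x₁ - x₀)) - (x₁ - x₀)*(x - x₀)/6) x := by
        intro x _
        have h1 := (((hb x).pow 4).div_const (24*(x₁ - x₀))).sub
          ((((hb x).pow 2).const_mul (x₁ - x₀)).div_const 12)
        refine h1.congr_deriv ?_
        field_simp
        ring
      rw [intervalIntegral.integral_eq_sub_of_hasDerivAt hH (by apply Continuous.intervalIntegrable; fun_prop)]
      field_simp
      ring)
  exact ⟨η₀, hη₀, η₁, hη₁, heq₀, heq₁⟩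
end
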